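/- arXiv:2112.09122 — 4 statements merged into one kernel-verified Lean document; each statement's English description precedes it below -/
import Mathlib

section
/- Fix integers n ≥ 2 and even m ≥ 2, set N = m·n, and let g_A, g_B, X be the permutations of ℤ/Nℤ defined in the context. Then X lies on both Cayley geodesics from the identity: X ∈ Γ(g_A,e) ∩ Γ(g_B,e), i.e., d(g_A,X) + d(X,e) = d(g_A,e) and d(g_B,X) + d(X,e) = d(g_B,e). Moreover, the orbit partition of X equals the meet of the orbit partitions of g_A and g_B in the partition lattice: P(X) = P(g_A) ∧ P(g_B). -/
noncomputable def cycleCount {α : Type*} (g : Equiv.Perm α) : ℕ :=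
  Nat.card (Quotient (Setoid.mk g.SameCycle
    ⟨fun x => Equiv.Perm.SameCycle.refl g x,
     fun h => h.symm,
     fun h₁ h₂ => h₁.trans h₂⟩))

lemma cycleCount_conj {α : Type*} (c g : Equiv.Perm α) :
    cycleCount (c * g * c⁻¹) = cycleCount g := by
  apply Nat.card_congr
  exact Quotient.congr c.symm fun a b => by
    exact Equiv.Perm.sameCycle_conj

lemma sameCycle_invol {α : Type*} {G : Equiv.Perm α} (hG : G * G = 1) {x y : α} :
    G.SameCycle x y ↔ y = x ∨ y = G x := by
  constructor
  · rintro ⟨i, rfl⟩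
    have h2 : G ^ (2 : ℤ) = 1 := by
      rw [show (2:ℤ) = 1 + 1 by ring, zpow_add, zpow_one, hG]
    rcases Int.even_or_odd i with ⟨j, hj⟩ | ⟨j, hj⟩
    · left
      rw [hj, show j + j = 2 * j by ring, zpow_mul, h2, one_zpow, Equiv.Perm.one_apply]
    · right
      rw [hj, show 2 * j + 1 = 2 * j + 1 by rfl, zpow_add, zpow_mul, h2, one_zpow, one_mul,
        zpow_one]
  · rintro (rfl | rfl)
    · exact ⟨0, rfl⟩
    · exact ⟨1, by simp⟩

-- nat helpers
lemma helperA (h k q r : ℕ) (hr : r < h) : (q * h + r) % (h * k) = q % k * h + r := by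
  rcases Nat.eq_zero_or_pos k with rfl | hk
  · simp
  obtain ⟨t, u, rfl, hu⟩ : ∃ t u, q = k * t + u ∧ u < k :=
    ⟨q / k, q % k, (Nat.div_add_mod q k).symm, Nat.mod_lt _ hk⟩
  have h1 : (k * t + u) % k = u := by rw [Nat.mul_add_mod, Nat.mod_eq_of_lt hu]
  rw [h1, show (k * t + u) * h + r = (h * k) * t + (u * h + r) by ring,
    Nat.mul_add_mod, Nat.mod_eq_of_lt]
  calc u * h + r < u * h + h := by omega
    _ = (u + 1) * h := by ring
    _ ≤ k * h := Nat.mul_le_mul_right h hu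
    _ = h * k := Nat.mul_comm _ _

lemma helperB (h k q r : ℕ) (hh : 0 < h) (hr : r < h) (hk : 0 < k) :
    (q * h + r) / (h * k) = q / k := by
  obtain ⟨t, u, rfl, hu⟩ : ∃ t u, q = k * t + u ∧ u < k :=
    ⟨q / k, q % k, (Nat.div_add_mod q k).symm, Nat.mod_lt _ hk⟩
  have h1 : (k * t + u) / k = t := by rw [Nat.mul_add_div hk, Nat.div_eq_of_lt hu, Nat.add_zero]
  rw [h1, show (k * t + u) * h + r = (h * k) * t + (u * h + r) by ring,
    Nat.mul_add_div (by positivity), Nat.div_eq_of_lt, Nat.add_zero]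
  calc u * h + r < u * h + h := by omega
    _ = (u + 1) * h := by ring
    _ ≤ k * h := Nat.mul_le_mul_right h hu
    _ = h * k := Nat.mul_comm _ _
section blocks
set_option linter.unusedSectionVars false
set_option linter.unusedVariables false

variable {N : ℕ} [NeZero N] {b : ℕ} {P : Equiv.Perm (ZMod N)}

lemma block_iter (hb : 0 < b) (hbN : b ∣ N)
    (hP : ∀ q r : ℕ, r < b → P ((q * b + r : ℕ) : ZMod N) = ((q * b + (r + 1) % b : ℕ) : ZMod N)) :
    ∀ (j : ℕ) (x : ZMod N),
      (P ^ j) x = ((x.val / b * b + (x.val % b + j) % b : ℕ) : ZMod N) := by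
  intro j x
  induction j with
  | zero =>
    rw [pow_zero, Equiv.Perm.one_apply, Nat.add_zero, Nat.mod_eq_of_lt (Nat.mod_lt _ hb),
      Nat.div_add_mod', ZMod.natCast_zmod_val]
  | succ j ih =>
    rw [pow_succ', Equiv.Perm.mul_apply, ih,
      hP _ _ (Nat.mod_lt _ hb), Nat.mod_add_mod, add_assoc]

lemma block_lt (hb : 0 < b) (hbN : b ∣ N) {q s : ℕ} (hq : q < N / b) (hs : s < b) :
    q * b + s < N := by
  have h2 : (q + 1) * b ≤ N := by
    calc (q + 1) * b ≤ (N / b) * b := Nat.mul_le_mul_right b hq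
      _ = N := Nat.div_mul_cancel hbN
  calc q * b + s < q * b + b := by omega
    _ = (q + 1) * b := by ring
    _ ≤ N := h2

lemma block_div_lt (hb : 0 < b) (hbN : b ∣ N) (x : ZMod N) : x.val / b < N / b :=
  Nat.div_lt_div_of_lt_of_dvd hbN x.val_lt

lemma block_iter_val (hb : 0 < b) (hbN : b ∣ N)
    (hP : ∀ q r : ℕ, r < b → P ((q * b + r : ℕ) : ZMod N) = ((q * b + (r + 1) % b : ℕ) : ZMod N))
    (j : ℕ) (x : ZMod N) :
    ((P ^ j) x).val = x.val / b * b + (x.val % b + j) % b := by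
  rw [block_iter hb hbN hP j x, ZMod.val_natCast,
    Nat.mod_eq_of_lt (block_lt hb hbN (block_div_lt hb hbN x) (Nat.mod_lt _ hb))]

lemma block_sameCycle (hb : 0 < b) (hbN : b ∣ N)
    (hP : ∀ q r : ℕ, r < b → P ((q * b + r : ℕ) : ZMod N) = ((q * b + (r + 1) % b : ℕ) : ZMod N))
    (x y : ZMod N) :
    P.SameCycle x y ↔ x.val / b = y.val / b := by
  have step : ∀ z : ZMod N, (P z).val / b = z.val / b := by
    intro z
    have := block_iter_val hb hbN hP 1 z
    rw [pow_one] at this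
    rw [this,
      show z.val / b * b + (z.val % b + 1) % b = (z.val % b + 1) % b + b * (z.val / b) by ring,
      Nat.add_mul_div_left _ _ hb, Nat.div_eq_of_lt (Nat.mod_lt _ hb), Nat.zero_add]
  have stepinv : ∀ z : ZMod N, (P⁻¹ z).val / b = z.val / b := by
    intro z
    have := step (P⁻¹ z)
    rw [show P (P⁻¹ z) = z from P.apply_symm_apply z] at this
    exact this.symm
  have zdiv : ∀ (i : ℤ) (z : ZMod N), ((P ^ i) z).val / b = z.val / b := by
    intro i
    induction i using Int.induction_on with
    | zero => simp
    | succ k ih =>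
      intro z
      rw [zpow_add_one, Equiv.Perm.mul_apply, ih (P z), step]
    | pred k ih =>
      intro z
      rw [zpow_sub_one, Equiv.Perm.mul_apply, ih (P⁻¹ z), stepinv]
  constructor
  · rintro ⟨i, rfl⟩
    exact (zdiv i x).symm
  · intro hdiv
    refine ⟨((b - x.val % b + y.val % b : ℕ) : ℤ), ?_⟩
    rw [zpow_natCast, block_iter hb hbN hP]
    have h1 : x.val % b < b := Nat.mod_lt _ hb
    have h2 : y.val % b < b := Nat.mod_lt _ hb
    rw [show x.val % b + (b - x.val % b + y.val % b) = y.val % b + b by omega,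
      Nat.add_mod_right, Nat.mod_eq_of_lt h2, hdiv, Nat.div_add_mod', ZMod.natCast_zmod_val]

lemma block_cycleCount (hb : 0 < b) (hbN : b ∣ N)
    (hP : ∀ q r : ℕ, r < b → P ((q * b + r : ℕ) : ZMod N) = ((q * b + (r + 1) % b : ℕ) : ZMod N)) :
    cycleCount P = N / b := by
  have key := block_sameCycle hb hbN hP
  have e : Quotient (Setoid.mk P.SameCycle
      ⟨fun x => Equiv.Perm.SameCycle.refl P x, fun h => h.symm, fun h₁ h₂ => h₁.trans h₂⟩)
      ≃ Fin (N / b) := by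
    refine Equiv.ofBijective
      (Quotient.lift (fun x : ZMod N => (⟨x.val / b, block_div_lt hb hbN x⟩ : Fin (N / b)))
        (fun a c hac => Fin.ext ((key a c).mp hac))) ⟨?_, ?_⟩
    · intro q1 q2
      induction q1 using Quotient.inductionOn with | _ a =>
      induction q2 using Quotient.inductionOn with | _ c =>
      intro hf
      exact Quotient.sound ((key a c).mpr (congrArg Fin.val hf))
    · rintro ⟨q, hq⟩
      refine ⟨Quotient.mk _ ((q * b : ℕ) : ZMod N), ?_⟩
      have hlt : q * b < N := by
        have := block_lt hb hbN hq (show 0 < b from hb)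
        omega
      apply Fin.ext
      simp only [Quotient.lift_mk]
      rw [ZMod.val_natCast, Nat.mod_eq_of_lt hlt, Nat.mul_div_cancel _ hb]
  rw [cycleCount, Nat.card_congr e, Nat.card_eq_fintype_card, Fintype.card_fin]

end blocks
/-- The function describing the action of `g_B * X⁻¹` on values. -/
def Gf (h a : ℕ) : ℕ :=
  if a % h = 0 then (if a % (2 * h) = 0 then a + h else a - h) else a

lemma modh_of_mod2h {h a : ℕ} (ha : a % (2 * h) = 0 ∨ a % (2 * h) = h) : a % h = 0 := by
  have hd : h ∣ 2 * h := dvd_mul_left h 2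
  have := Nat.mod_mod_of_dvd a hd
  rcases ha with ha | ha <;> rw [ha] at this <;> simp at this <;> omega

lemma mod2h_of_modh {h a : ℕ} (hh : 0 < h) (ha : a % h = 0) :
    a % (2 * h) = 0 ∨ a % (2 * h) = h := by
  have hd : h ∣ 2 * h := dvd_mul_left h 2
  have h1 : a % (2 * h) % h = 0 := by rw [Nat.mod_mod_of_dvd a hd, ha]
  have h2 : a % (2 * h) < 2 * h := Nat.mod_lt _ (by omega)
  obtain ⟨t, ht⟩ := Nat.dvd_of_mod_eq_zero h1
  have ht2 : t < 2 := by
    by_contra hc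
    push_neg at hc
    have h3 : h * 2 ≤ h * t := Nat.mul_le_mul_left h hc
    omega
  interval_cases t <;> omega

lemma Gf_lt {h n a : ℕ} (hh : 0 < h) (hn : 0 < n) (ha : a < 2 * h * n) :
    Gf h a < 2 * h * n := by
  unfold Gf
  split_ifs with h1 h2
  · obtain ⟨t, ht⟩ := Nat.dvd_of_mod_eq_zero h2
    have htn : t < n := by
      by_contra hc
      push_neg at hc
      have : 2 * h * n ≤ 2 * h * t := Nat.mul_le_mul_left _ hc
      omega
    have e1 : 2 * h * (t + 1) ≤ 2 * h * n := Nat.mul_le_mul_left _ htn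
    have e2 : 2 * h * (t + 1) = 2 * h * t + 2 * h := by ring
    omega
  · omega
  · exact ha

lemma Gf_mod2h_h {h a : ℕ} (hh : 0 < h) (h4 : a % (2 * h) = h) :
    Gf h a = a - h ∧ (a - h) % (2 * h) = 0 ∧ h ≤ a := by
  obtain ⟨t, ht⟩ : ∃ t, a = 2 * h * t + h :=
    ⟨a / (2 * h), by
      have hdm := Nat.div_add_mod a (2 * h); rw [h4] at hdm; exact hdm.symm⟩
  have hmh : a % h = 0 := modh_of_mod2h (Or.inr h4)
  have e0 : (a - h) % (2 * h) = 0 := by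
    have : a - h = 2 * h * t := by omega
    rw [this, Nat.mul_mod_right]
  refine ⟨?_, e0, by omega⟩
  unfold Gf
  rw [if_pos hmh, if_neg (by omega)]

lemma Gf_mod2h_0 {h a : ℕ} (hh : 0 < h) (h4 : a % (2 * h) = 0) :
    Gf h a = a + h ∧ (a + h) % (2 * h) = h := by
  obtain ⟨t, ht⟩ := Nat.dvd_of_mod_eq_zero h4
  have hmh : a % h = 0 := modh_of_mod2h (Or.inl h4)
  have e1 : (a + h) % (2 * h) = h := by
    rw [ht, Nat.mul_add_mod, Nat.mod_eq_of_lt (by omega)]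
  refine ⟨?_, e1⟩
  unfold Gf
  rw [if_pos hmh, if_pos h4]

lemma Gf_not_modh {h a : ℕ} (h1 : ¬ a % h = 0) : Gf h a = a := by
  unfold Gf; rw [if_neg h1]

lemma Gf_invol {h a : ℕ} (hh : 0 < h) : Gf h (Gf h a) = a := by
  by_cases h1 : a % h = 0
  · rcases mod2h_of_modh hh h1 with h2 | h2
    · obtain ⟨e1, e2⟩ := Gf_mod2h_0 hh h2
      rw [e1]
      obtain ⟨f1, f2, f3⟩ := Gf_mod2h_h hh e2
      rw [f1]; omega
    · obtain ⟨e1, e2, e3⟩ := Gf_mod2h_h hh h2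
      rw [e1]
      obtain ⟨f1, f2⟩ := Gf_mod2h_0 hh e2
      rw [f1]; omega
  · rw [Gf_not_modh h1, Gf_not_modh h1]
set_option linter.unusedVariables false in
lemma Gf_eq {h a n : ℕ} (hh : 0 < h) (ha : a < 2 * h * n) :
    (a / h * h + (a % h + (h - 1)) % h) / (2 * h) * (2 * h)
      + ((a / h * h + (a % h + (h - 1)) % h) % (2 * h) + 1) % (2 * h) = Gf h a := by
  obtain ⟨j, r, rfl, hr⟩ : ∃ j r, a = j * h + r ∧ r < h :=
    ⟨a / h, a % h, (Nat.div_add_mod' a h).symm, Nat.mod_lt _ hh⟩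
  have hdj : (j * h + r) / h = j := by
    rw [add_comm, Nat.add_mul_div_right _ _ hh, Nat.div_eq_of_lt hr, Nat.zero_add]
  have hmr : (j * h + r) % h = r := by
    rw [add_comm, Nat.add_mul_mod_self_right, Nat.mod_eq_of_lt hr]
  rw [hdj, hmr]
  have h2h : 2 * h = h * 2 := by ring
  have hmod2h : (j * h + r) % (2 * h) = j % 2 * h + r := by
    rw [h2h, helperA h 2 j r hr]
  obtain ⟨d, e, rfl, he⟩ : ∃ d e, j = 2 * d + e ∧ e < 2 := ⟨j / 2, j % 2, by omega, by omega⟩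
  have hj2 : (2 * d + e) / 2 = d := by omega
  have hjm2 : (2 * d + e) % 2 = e := by omega
  by_cases hr0 : r = 0
  · subst hr0
    rw [Nat.zero_add, Nat.mod_eq_of_lt (show h - 1 < h by omega)]
    have hA : ((2 * d + e) * h + (h - 1)) % (h * 2) = e * h + (h - 1) := by
      rw [helperA h 2 _ _ (by omega), hjm2]
    have hB : ((2 * d + e) * h + (h - 1)) / (h * 2) = d := by
      rw [helperB h 2 _ _ hh (by omega) (by omega), hj2]
    rw [h2h, hA, hB]
    have hGf : (2 * d + e) * h + 0 = (2 * d + e) * h := by omega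
    interval_cases e
    · -- even block start: result a + h
      have hm0 : ((2 * d + 0) * h + 0) % (2 * h) = 0 := by
        rw [Nat.add_zero, show (2 * d + 0) * h = 2 * h * d by ring, Nat.mul_mod_right]
      obtain ⟨g1, g2⟩ := Gf_mod2h_0 hh hm0
      rw [g1]
      have : 0 * h + (h - 1) + 1 = h := by omega
      rw [this, Nat.mod_eq_of_lt (show h < h * 2 by omega)]
      ring_nf
    · -- odd block start: result a - h
      have hm1 : ((2 * d + 1) * h + 0) % (2 * h) = h := by
        rw [Nat.add_zero, show (2 * d + 1) * h = 2 * h * d + h by ring, Nat.mul_add_mod,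
          Nat.mod_eq_of_lt (by omega)]
      obtain ⟨g1, g2, g3⟩ := Gf_mod2h_h hh hm1
      rw [g1]
      have : 1 * h + (h - 1) + 1 = h * 2 := by omega
      rw [this, Nat.mod_self]
      have : (2 * d + 1) * h + 0 - h = d * (h * 2) := by
        have : (2 * d + 1) * h = d * (h * 2) + h := by ring
        omega
      rw [this]
      omega
  · -- interior point: fixed
    have hmodstep : (r + (h - 1)) % h = r - 1 := by
      rw [show r + (h - 1) = (r - 1) + h by omega, Nat.add_mod_right,
        Nat.mod_eq_of_lt (by omega)]
    rw [hmodstep]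
    have hA : ((2 * d + e) * h + (r - 1)) % (h * 2) = e * h + (r - 1) := by
      rw [helperA h 2 _ _ (by omega), hjm2]
    have hB : ((2 * d + e) * h + (r - 1)) / (h * 2) = d := by
      rw [helperB h 2 _ _ hh (by omega) (by omega), hj2]
    rw [h2h, hA, hB]
    have hst : e * h + (r - 1) + 1 = e * h + r := by omega
    have hlt : e * h + r < h * 2 := by
      have : e * h ≤ 1 * h := Nat.mul_le_mul_right h (by omega)
      omega
    rw [hst, Nat.mod_eq_of_lt hlt]
    have hmm : ((2 * d + e) * h + r) % h = r := hmr
    rw [Gf_not_modh (by omega)]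
    ring
lemma core2 {n j1 j2 : ℕ} (hn : 2 ≤ n) (h1 : j1 < 2 * n) (h2 : j2 < 2 * n)
    (e1 : j1 / 2 = j2 / 2)
    (e2 : (j1 + (2 * n - 1)) % (2 * n) / 2 = (j2 + (2 * n - 1)) % (2 * n) / 2) :
    j1 = j2 := by
  have hmod : ∀ j, j < 2 * n →
      (j + (2 * n - 1)) % (2 * n) = if j = 0 then 2 * n - 1 else j - 1 := by
    intro j hj
    split_ifs with hj0
    · subst hj0; rw [Nat.zero_add, Nat.mod_eq_of_lt (by omega)]
    · rw [show j + (2 * n - 1) = (j - 1) + 2 * n by omega, Nat.add_mod_right,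
        Nat.mod_eq_of_lt (by omega)]
  rw [hmod j1 h1, hmod j2 h2] at e2
  split_ifs at e2 <;> omega

lemma div2h {h : ℕ} (a : ℕ) : a / (2 * h) = a / h / 2 := by
  rw [Nat.div_div_eq_div_mul, show h * 2 = 2 * h by ring]

lemma shift_div {h n a : ℕ} (hh : 0 < h) (hn : 0 < n) (ha : a < 2 * h * n) :
    (a + (2 * h * n - h)) % (2 * h * n) / (2 * h)
      = (a / h + (2 * n - 1)) % (2 * n) / 2 := by
  obtain ⟨j, r, rfl, hr⟩ : ∃ j r, a = j * h + r ∧ r < h :=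
    ⟨a / h, a % h, (Nat.div_add_mod' a h).symm, Nat.mod_lt _ hh⟩
  have hdj : (j * h + r) / h = j := by
    rw [add_comm, Nat.add_mul_div_right _ _ hh, Nat.div_eq_of_lt hr, Nat.zero_add]
  rw [hdj]
  obtain ⟨k, hk⟩ : ∃ k, 2 * n = k + 1 := ⟨2 * n - 1, by omega⟩
  have hM : 2 * n - 1 = k := by omega
  have hNk : 2 * h * n = h * (k + 1) := by
    have : 2 * h * n = h * (2 * n) := by ring
    rw [this, hk]
  have hsub : 2 * h * n - h = h * k := by
    have : h * (k + 1) = h * k + h := by ring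
    omega
  have harg : j * h + r + (2 * h * n - h) = (j + k) * h + r := by
    rw [hsub]; ring
  rw [harg, hM, hNk, helperA h (k + 1) (j + k) r hr, show (2:ℕ) * h = h * 2 by ring,
    helperB h 2 _ _ hh hr (by omega), hk]

lemma cycleCount_invol {α : Type*} (G : Equiv.Perm α) (p : α → Prop) [DecidablePred p]
    (hG : G * G = 1) (hp : ∀ x, p x → ¬ p (G x))
    (hfix : ∀ x, ¬ p x → ¬ p (G x) → G x = x) :
    cycleCount G = Nat.card {z : α // ¬ p z} := by
  have hGG : ∀ x, G (G x) = x := by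
    intro x
    have := congrArg (fun σ : Equiv.Perm α => σ x) hG
    simpa using this
  set rep : α → α := fun x => if p x then G x else x with hrep
  have hrep_not : ∀ x, ¬ p (rep x) := by
    intro x
    by_cases hx : p x
    · simp only [hrep, if_pos hx]; exact hp x hx
    · simpa only [hrep, if_neg hx] using hx
  have hrep_same : ∀ x, G.SameCycle x (rep x) := by
    intro x
    by_cases hx : p x
    · simp only [hrep, if_pos hx]; exact ⟨1, by simp⟩
    · simp only [hrep, if_neg hx]
      exact ⟨0, rfl⟩
  have hrep_eq : ∀ x y, G.SameCycle x y → rep x = rep y := by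
    intro x y hxy
    rcases (sameCycle_invol hG).mp hxy with rfl | rfl
    · rfl
    · by_cases hx : p x
      · simp only [hrep, if_pos hx, if_neg (hp x hx), hGG]
      · by_cases hgx : p (G x)
        · simp only [hrep, if_neg hx, if_pos hgx, hGG]
        · rw [hfix x hx hgx]
  have hrep_fix : ∀ z, ¬ p z → rep z = z := fun z hz => by
    simp only [hrep, if_neg hz]
  apply Nat.card_congr
  refine Equiv.ofBijective
    (Quotient.lift (fun x : α => (⟨rep x, hrep_not x⟩ : {z : α // ¬ p z}))
      (fun a c hac => Subtype.ext (hrep_eq a c hac))) ⟨?_, ?_⟩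
  · intro q1 q2
    induction q1 using Quotient.inductionOn with | _ a =>
    induction q2 using Quotient.inductionOn with | _ c =>
    intro hf
    have : rep a = rep c := congrArg Subtype.val hf
    exact Quotient.sound ((hrep_same a).trans (this ▸ (hrep_same c).symm))
  · rintro ⟨z, hz⟩
    exact ⟨Quotient.mk _ z, Subtype.ext (hrep_fix z hz)⟩

lemma card_not_mod {N h n : ℕ} [NeZero N] (hh : 0 < h) (hn : 0 < n) (hN : N = 2 * h * n) :
    Nat.card {z : ZMod N // ¬ (z.val % (2 * h) = h)} = N - n := by
  have hcard : (Finset.univ.filter (fun z : ZMod N => z.val % (2 * h) = h)).card = n := by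
    rw [← Finset.card_range n]
    apply Finset.card_bij' (fun z _ => z.val / (2 * h))
      (fun q _ => ((q * (2 * h) + h : ℕ) : ZMod N))
    · intro z hz
      simp only [Finset.mem_filter, Finset.mem_univ, true_and] at hz
      simp only [Finset.mem_range]
      rw [Nat.div_lt_iff_lt_mul (by omega)]
      have := z.val_lt
      calc z.val < N := z.val_lt
        _ = n * (2 * h) := by rw [hN]; ring
    · intro q hq
      simp only [Finset.mem_range] at hq
      have hlt : q * (2 * h) + h < N := by
        have e1 : (q + 1) * (2 * h) ≤ n * (2 * h) := Nat.mul_le_mul_right _ (by omega)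
        have e2 : (q + 1) * (2 * h) = q * (2 * h) + 2 * h := by ring
        have e3 : n * (2 * h) = N := by rw [hN]; ring
        omega
      simp only [Finset.mem_filter, Finset.mem_univ, true_and]
      rw [ZMod.val_natCast, Nat.mod_eq_of_lt hlt,
        show q * (2 * h) + h = h + 2 * h * q by ring,
        Nat.add_mul_mod_self_left, Nat.mod_eq_of_lt (by omega)]
    · intro z hz
      simp only [Finset.mem_filter, Finset.mem_univ, true_and] at hz
      have hdm := Nat.div_add_mod z.val (2 * h)
      rw [hz] at hdm
      conv_rhs => rw [← ZMod.natCast_zmod_val z]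
      congr 1
      have : z.val / (2 * h) * (2 * h) = 2 * h * (z.val / (2 * h)) := by ring
      omega
    · intro q hq
      simp only [Finset.mem_range] at hq
      have hlt : q * (2 * h) + h < N := by
        have e1 : (q + 1) * (2 * h) ≤ n * (2 * h) := Nat.mul_le_mul_right _ (by omega)
        have e2 : (q + 1) * (2 * h) = q * (2 * h) + 2 * h := by ring
        have e3 : n * (2 * h) = N := by rw [hN]; ring
        omega
      rw [ZMod.val_natCast, Nat.mod_eq_of_lt hlt,
        show q * (2 * h) + h = h + 2 * h * q by ring,
        Nat.add_mul_div_left _ _ (by omega : 0 < 2 * h), Nat.div_eq_of_lt (by omega),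
        Nat.zero_add]
  rw [Nat.card_eq_fintype_card, Fintype.card_subtype]
  have htot : (Finset.univ.filter (fun z : ZMod N => z.val % (2 * h) = h)).card +
      (Finset.univ.filter (fun z : ZMod N => ¬ z.val % (2 * h) = h)).card
        = (Finset.univ : Finset (ZMod N)).card :=
    Finset.card_filter_add_card_filter_not _
  have huniv : (Finset.univ : Finset (ZMod N)).card = N := by
    rw [Finset.card_univ, ZMod.card]
  omega
/-- The Cayley distance `d(g,h) = N - #(g h⁻¹)` on the permutations of a finite set. -/
noncomputable def cayley {α : Type*} (g h : Equiv.Perm α) : ℕ :=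
  Nat.card α - cycleCount (g * h⁻¹)

/-- `Γ(g,h)`: the set of permutations on the Cayley geodesic between `g` and `h`. -/
def geodesic {α : Type*} (g h : Equiv.Perm α) : Set (Equiv.Perm α) :=
  {k | cayley g k + cayley k h = cayley g h}

/-- The partition of the ground set into the orbits (cycles) of a permutation `g`,
as a `Setoid`. -/
def sameCycleSetoid {α : Type*} (g : Equiv.Perm α) : Setoid α :=
  ⟨g.SameCycle,
    ⟨fun x => Equiv.Perm.SameCycle.refl g x,
     fun h => h.symm,
     fun h₁ h₂ => h₁.trans h₂⟩⟩
/-- `X` lies on both Cayley geodesics `Γ(g_A,e)` and `Γ(g_B,e)`, and its orbit partition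
is the meet `P(g_A) ∧ P(g_B)` in the partition lattice. -/
theorem stmt14 (n m : ℕ) (hn : 2 ≤ n) (hm : 2 ≤ m) (hme : Even m)
    (gB gA X : Equiv.Perm (ZMod (m * n)))
(hgB : ∀ q r : ℕ, r < m →
      gB ((q * m + r : ℕ) : ZMod (m * n)) = ((q * m + (r + 1) % m : ℕ) : ZMod (m * n)))
    (hgA : gA = Equiv.addLeft ((m / 2 : ℕ) : ZMod (m * n)) * gB *
      (Equiv.addLeft ((m / 2 : ℕ) : ZMod (m * n)))⁻¹)
(hX : ∀ q r : ℕ, r < m / 2 →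
      X ((q * (m / 2) + r : ℕ) : ZMod (m * n)) =
        ((q * (m / 2) + (r + 1) % (m / 2) : ℕ) : ZMod (m * n)))
    :
    X ∈ geodesic gA 1 ∧ X ∈ geodesic gB 1 ∧
    sameCycleSetoid X = sameCycleSetoid gA ⊓ sameCycleSetoid gB := by
  obtain ⟨h, hme⟩ := hme
  have hh : 0 < h := by omega
  have hm2 : m = 2 * h := by omega
  have hmd : m / 2 = h := by omega
  haveI : NeZero (m * n) := ⟨Nat.mul_ne_zero (by omega) (by omega)⟩
  rw [hmd] at hX hgA
  have hN : m * n = 2 * h * n := by rw [hm2]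
  have hNh2 : m * n = h * (2 * n) := by rw [hm2]; ring
  have hm0 : 0 < m := by omega
  have hBdvd : m ∣ m * n := ⟨n, rfl⟩
  have hXdvd : h ∣ m * n := ⟨2 * n, hNh2⟩
  have hle2n : 2 * n ≤ m * n := by
    rw [hN]
    calc 2 * n = 2 * 1 * n := by ring
      _ ≤ 2 * h * n := Nat.mul_le_mul_right n (by omega)
  have hnle : n ≤ m * n := Nat.le_mul_of_pos_left n (by omega)
  have hmle : m ≤ m * n := Nat.le_mul_of_pos_right m (by omega)
  have hval : ∀ a : ℕ, a < m * n → ((a : ZMod (m * n))).val = a := fun a ha => by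
    rw [ZMod.val_natCast, Nat.mod_eq_of_lt ha]
  -- cycle counts of gB and X
  have cB : cycleCount gB = n := by
    rw [block_cycleCount hm0 hBdvd hgB, Nat.mul_div_cancel_left n hm0]
  have cX : cycleCount X = 2 * n := by
    rw [block_cycleCount hh hXdvd hX, hNh2, Nat.mul_div_cancel_left _ hh]
  -- X commutes with translation by h
  have hXs : ∀ x : ZMod (m * n),
      X (((h : ℕ) : ZMod (m * n)) + x) = ((h : ℕ) : ZMod (m * n)) + X x := by
    intro x
    obtain ⟨q, r, hx, hr⟩ : ∃ q r, x = ((q * h + r : ℕ) : ZMod (m * n)) ∧ r < h :=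
      ⟨x.val / h, x.val % h, by rw [Nat.div_add_mod', ZMod.natCast_zmod_val], Nat.mod_lt _ hh⟩
    have e1 : ((h : ℕ) : ZMod (m * n)) + x = (((q + 1) * h + r : ℕ) : ZMod (m * n)) := by
      rw [hx]; push_cast; ring
    rw [e1, hX (q + 1) r hr, hx, hX q r hr]
    push_cast; ring
  have hcomm : Equiv.addLeft ((h : ℕ) : ZMod (m * n)) * X
      = X * Equiv.addLeft ((h : ℕ) : ZMod (m * n)) := by
    apply Equiv.ext
    intro x
    simp only [Equiv.Perm.mul_apply, Equiv.coe_addLeft]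
    exact (hXs x).symm
  have hCom : Commute (Equiv.addLeft ((h : ℕ) : ZMod (m * n))) X := hcomm
  -- inverse of X as a power
  have hXpow : ∀ x : ZMod (m * n), (X ^ h) x = x := by
    intro x
    rw [block_iter hh hXdvd hX h x, Nat.add_mod_right,
      Nat.mod_mod_of_dvd _ (dvd_refl h), Nat.div_add_mod', ZMod.natCast_zmod_val]
  have hXinv : X⁻¹ = X ^ (h - 1) := by
    have hu : X ^ (h - 1) * X = 1 := by
      rw [← pow_succ, show h - 1 + 1 = h by omega]
      apply Equiv.ext
      intro x
      simpa using hXpow x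
    exact (eq_inv_of_mul_eq_one_left hu).symm
  -- action of gB * X⁻¹
  have hGact : ∀ x : ZMod (m * n),
      (gB * X⁻¹) x = ((Gf h x.val : ℕ) : ZMod (m * n)) := by
    intro x
    rw [Equiv.Perm.mul_apply, hXinv, block_iter hh hXdvd hX (h - 1) x]
    have hvlt : x.val / h * h + (x.val % h + (h - 1)) % h < m * n :=
      block_lt hh hXdvd (block_div_lt hh hXdvd x) (Nat.mod_lt _ hh)
    set v := x.val / h * h + (x.val % h + (h - 1)) % h with hv
    have h1 : gB ((v : ℕ) : ZMod (m * n))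
        = ((v / m * m + (v % m + 1) % m : ℕ) : ZMod (m * n)) := by
      have := block_iter hm0 hBdvd hgB 1 ((v : ℕ) : ZMod (m * n))
      rwa [pow_one, hval v hvlt] at this
    rw [h1]
    congr 1
    have hx1 : x.val < m * n := x.val_lt
    have hvx : x.val < 2 * h * n := by omega
    have heq := Gf_eq (n := n) hh hvx
    rw [← hm2] at heq
    rw [hv]
    exact heq
  have hGval : ∀ x : ZMod (m * n), ((gB * X⁻¹) x).val = Gf h x.val := by
    intro x
    have hx1 : x.val < m * n := x.val_lt
    have hvx : x.val < 2 * h * n := by omega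
    have hg := Gf_lt hh (show 0 < n by omega) hvx
    rw [hGact x, hval _ (by omega)]
  have hGG : (gB * X⁻¹) * (gB * X⁻¹) = 1 := by
    apply Equiv.ext
    intro x
    rw [Equiv.Perm.mul_apply, Equiv.Perm.one_apply, hGact, hGval, Gf_invol hh,
      ZMod.natCast_zmod_val]
  -- cycle count of gB * X⁻¹
  have cG : cycleCount (gB * X⁻¹) = m * n - n := by
    rw [cycleCount_invol (gB * X⁻¹) (fun z => z.val % (2 * h) = h) hGG ?_ ?_]
    · exact card_not_mod hh (by omega) hN
    · intro x hx
      obtain ⟨e1, e2, e3⟩ := Gf_mod2h_h hh hx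
      show ¬ ((gB * X⁻¹) x).val % (2 * h) = h
      rw [hGval, e1, e2]
      omega
    · intro x hx hgx
      by_cases hmod : x.val % h = 0
      · rcases mod2h_of_modh hh hmod with h0 | h0
        · obtain ⟨e1, e2⟩ := Gf_mod2h_0 hh h0
          exfalso
          apply hgx
          show ((gB * X⁻¹) x).val % (2 * h) = h
          rw [hGval, e1, e2]
        · exact absurd h0 hx
      · rw [hGact, Gf_not_modh hmod, ZMod.natCast_zmod_val]
  -- gA facts
  have cA : cycleCount gA = n := by rw [hgA, cycleCount_conj]; exact cB
  have hconjG : gA * X⁻¹ = Equiv.addLeft ((h : ℕ) : ZMod (m * n)) * (gB * X⁻¹) *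
      (Equiv.addLeft ((h : ℕ) : ZMod (m * n)))⁻¹ := by
    rw [hgA, mul_assoc (Equiv.addLeft ((h : ℕ) : ZMod (m * n)) * gB),
      ((hCom.inv_left).inv_right).eq, ← mul_assoc,
      mul_assoc (Equiv.addLeft ((h : ℕ) : ZMod (m * n))) gB X⁻¹]
  have cAG : cycleCount (gA * X⁻¹) = m * n - n := by
    rw [hconjG, cycleCount_conj]; exact cG
  -- assembling the geodesic statements
  have hcard : Nat.card (ZMod (m * n)) = m * n := Nat.card_zmod (m * n)
  have cayX1 : cayley X 1 = m * n - 2 * n := by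
    rw [cayley, inv_one, mul_one, cX, hcard]
  have cayB1 : cayley gB 1 = m * n - n := by
    rw [cayley, inv_one, mul_one, cB, hcard]
  have cayA1 : cayley gA 1 = m * n - n := by
    rw [cayley, inv_one, mul_one, cA, hcard]
  have cayBX : cayley gB X = n := by
    rw [cayley, cG, hcard]; omega
  have cayAX : cayley gA X = n := by
    rw [cayley, cAG, hcard]; omega
  refine ⟨?_, ?_, ?_⟩
  · show cayley gA X + cayley X 1 = cayley gA 1
    rw [cayAX, cayX1, cayA1]; omega
  · show cayley gB X + cayley X 1 = cayley gB 1
    rw [cayBX, cayX1, cayB1]; omega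
  · -- the partition meet
    have hsub : ∀ z : ZMod (m * n),
        (z - ((h : ℕ) : ZMod (m * n))).val = (z.val + (m * n - h)) % (m * n) := by
      intro z
      have hle : h ≤ m * n := by omega

      have h1 : ((z.val + (m * n - h) : ℕ) : ZMod (m * n))
          = z - ((h : ℕ) : ZMod (m * n)) := by
        rw [Nat.cast_add, Nat.cast_sub hle, ZMod.natCast_self, ZMod.natCast_zmod_val]
        ring
      rw [← h1, ZMod.val_natCast]
    have hcinv : ∀ z : ZMod (m * n),
        (Equiv.addLeft ((h : ℕ) : ZMod (m * n)))⁻¹ z = z - ((h : ℕ) : ZMod (m * n)) := by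
      intro z
      simp [Equiv.neg_addLeft, Equiv.coe_addLeft, neg_add_eq_sub]
    have chA : ∀ x y : ZMod (m * n), gA.SameCycle x y ↔
        (x - ((h : ℕ) : ZMod (m * n))).val / m = (y - ((h : ℕ) : ZMod (m * n))).val / m := by
      intro x y
      rw [hgA, Equiv.Perm.sameCycle_conj, hcinv, hcinv]
      exact block_sameCycle hm0 hBdvd hgB _ _
    apply Setoid.ext
    intro x y
    have hRinf : (sameCycleSetoid gA ⊓ sameCycleSetoid gB) x y
        ↔ gA.SameCycle x y ∧ gB.SameCycle x y := Setoid.inf_iff_and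
    rw [hRinf]
    show X.SameCycle x y ↔ _
    rw [block_sameCycle hh hXdvd hX x y, chA x y, block_sameCycle hm0 hBdvd hgB x y,
      hsub, hsub]
    have hax : x.val < 2 * h * n := by have := x.val_lt; omega
    have hay : y.val < 2 * h * n := by have := y.val_lt; omega
    have fdx : x.val / m = x.val / h / 2 := by
      have := div2h (h := h) x.val
      rwa [← hm2] at this
    have fdy : y.val / m = y.val / h / 2 := by
      have := div2h (h := h) y.val
      rwa [← hm2] at this
    have fsx : (x.val + (m * n - h)) % (m * n) / m
        = (x.val / h + (2 * n - 1)) % (2 * n) / 2 := by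
      have := shift_div hh (show 0 < n by omega) hax
      rwa [← hm2] at this
    have fsy : (y.val + (m * n - h)) % (m * n) / m
        = (y.val / h + (2 * n - 1)) % (2 * n) / 2 := by
      have := shift_div hh (show 0 < n by omega) hay
      rwa [← hm2] at this
    rw [fdx, fdy, fsx, fsy]
    constructor
    · intro he
      rw [he]
      exact ⟨rfl, rfl⟩
    · rintro ⟨e2, e1⟩
      have hjx : x.val / h < 2 * n := by
        rw [Nat.div_lt_iff_lt_mul hh]
        calc x.val < 2 * h * n := hax
          _ = 2 * n * h := by ring
      have hjy : y.val / h < 2 * n := by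
        rw [Nat.div_lt_iff_lt_mul hh]
        calc y.val < 2 * h * n := hay
          _ = 2 * n * h := by ring
      exact core2 hn hjx hjy e1 e2
end

section
/- Fix integers n ≥ 2 and even m ≥ 2, set N = m·n, and let g_A, g_B, X be the permutations of ℤ/Nℤ defined in the context. Then X is the unique element of Γ(g_A,e) ∩ Γ(g_B,e) of maximal distance from the identity: for every permutation g ∈ Γ(g_A,e) ∩ Γ(g_B,e) one has d(g,e) ≤ n·(m−2), with equality if and only if g = X. Equivalently, for every g ∈ Γ(g_A,e) ∩ Γ(g_B,e) one has d(g,g_A) ≥ n, with equality if and only if g = X. -/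
section General

open Equiv Equiv.Perm

variable {α : Type*}

/-- The setoid of the same-cycle relation. -/
def scSetoid (g : Equiv.Perm α) : Setoid α :=
  Setoid.mk g.SameCycle
    ⟨fun x => Equiv.Perm.SameCycle.refl g x,
     fun h => h.symm,
     fun h₁ h₂ => h₁.trans h₂⟩

theorem cycleCount_eq (g : Equiv.Perm α) :
    cycleCount g = Nat.card (Quotient (scSetoid g)) := rfl

theorem perm_pow_fix {σ : Equiv.Perm α} {x : α} (h : σ x = x) (i : ℕ) : (σ ^ i) x = x := by
  induction i with
  | zero => simp
  | succ k ih => rw [pow_succ, Equiv.Perm.mul_apply, h, ih]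

theorem setoid_pow (s : Setoid α) (σ : Equiv.Perm α)
    (h : ∀ z, s.r z (σ z)) (x : α) : ∀ k : ℕ, s.r x ((σ ^ k) x) := by
  intro k
  induction k with
  | zero => simpa using s.iseqv.refl x
  | succ k ih =>
      rw [pow_succ', Equiv.Perm.mul_apply]
      exact s.iseqv.trans ih (h _)

theorem setoid_closed [Finite α] (s : Setoid α) (σ : Equiv.Perm α)
    (h : ∀ z, s.r z (σ z)) {x y : α} (hxy : σ.SameCycle x y) : s.r x y := by
  obtain ⟨i, hi, rfl⟩ := hxy.exists_pow_eq'
  exact setoid_pow s σ h x i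

/-- Adding one "edge" `a ~ b` to an equivalence relation. -/
def addEdge (s : Setoid α) (a b : α) : Setoid α :=
  ⟨fun x y => s.r x y ∨ (s.r x a ∧ s.r b y) ∨ (s.r x b ∧ s.r a y),
   ⟨fun x => Or.inl (s.iseqv.refl x),
    by
      rintro x y (h | ⟨h1, h2⟩ | ⟨h1, h2⟩)
      · exact Or.inl (s.iseqv.symm h)
      · exact Or.inr (Or.inr ⟨s.iseqv.symm h2, s.iseqv.symm h1⟩)
      · exact Or.inr (Or.inl ⟨s.iseqv.symm h2, s.iseqv.symm h1⟩),
    by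
      rintro x y z (h | ⟨h1, h2⟩ | ⟨h1, h2⟩) (g | ⟨g1, g2⟩ | ⟨g1, g2⟩)
      · exact Or.inl (s.iseqv.trans h g)
      · exact Or.inr (Or.inl ⟨s.iseqv.trans h g1, g2⟩)
      · exact Or.inr (Or.inr ⟨s.iseqv.trans h g1, g2⟩)
      · exact Or.inr (Or.inl ⟨h1, s.iseqv.trans h2 g⟩)
      · exact Or.inl (s.iseqv.trans (s.iseqv.trans h1 (s.iseqv.symm (s.iseqv.trans h2 g1))) g2)
      · exact Or.inl (s.iseqv.trans h1 g2)
      · exact Or.inr (Or.inr ⟨h1, s.iseqv.trans h2 g⟩)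
      · exact Or.inl (s.iseqv.trans h1 g2)
      · exact Or.inl (s.iseqv.trans (s.iseqv.trans h1 (s.iseqv.symm (s.iseqv.trans h2 g1))) g2)⟩⟩

theorem addEdge_rel_left (s : Setoid α) (a b : α) {x y : α} (h : s.r x y) :
    (addEdge s a b).r x y := Or.inl h

theorem addEdge_rel_edge (s : Setoid α) (a b : α) : (addEdge s a b).r a b :=
  Or.inr (Or.inl ⟨s.iseqv.refl a, s.iseqv.refl b⟩)

theorem addEdge_eq_of_rel (s : Setoid α) {a b : α} (h : s.r a b) : addEdge s a b = s := by
  apply Setoid.ext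
  intro x y
  constructor
  · rintro (g | ⟨g1, g2⟩ | ⟨g1, g2⟩)
    · exact g
    · exact s.iseqv.trans g1 (s.iseqv.trans h g2)
    · exact s.iseqv.trans g1 (s.iseqv.trans (s.iseqv.symm h) g2)
  · exact Or.inl

theorem card_quot_addEdge [Finite α] (s : Setoid α) (a b : α) (hab : ¬ s.r a b) :
    Nat.card (Quotient (addEdge s a b)) + 1 = Nat.card (Quotient s) := by
  classical
  let f : {x : Quotient s // x ≠ Quotient.mk s b} → Quotient (addEdge s a b) :=
    fun x => Quotient.map (fun z => z) (fun u v huv => addEdge_rel_left s a b huv) x.1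
  have hbij : Function.Bijective f := by
    constructor
    · rintro ⟨x, hx⟩ ⟨y, hy⟩ hxy
      induction x using Quotient.ind with | _ x =>
      induction y using Quotient.ind with | _ y =>
      have hx' : ¬ s.r x b := fun h => hx (Quotient.sound h)
      have hy' : ¬ s.r y b := fun h => hy (Quotient.sound h)
      have : (addEdge s a b).r x y := Quotient.exact hxy
      rcases this with h | ⟨h1, h2⟩ | ⟨h1, h2⟩
      · exact Subtype.ext (Quotient.sound h)
      · exact absurd (s.iseqv.symm h2) hy'
      · exact absurd h1 hx'
    · intro q
      induction q using Quotient.ind with | _ z =>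
      by_cases hz : s.r z b
      · refine ⟨⟨Quotient.mk s a, fun h => hab (Quotient.exact h)⟩, ?_⟩
        exact Quotient.sound (Or.inr (Or.inl ⟨s.iseqv.refl a, s.iseqv.symm hz⟩))
      · exact ⟨⟨Quotient.mk s z, fun h => hz (Quotient.exact h)⟩, Quotient.sound
          ((addEdge s a b).iseqv.refl z)⟩
  have h1 : Nat.card (Quotient (addEdge s a b)) =
      Nat.card {x : Quotient s // x ≠ Quotient.mk s b} :=
    (Nat.card_eq_of_bijective f hbij).symm
  have h2 : Nat.card (Quotient s) =
      Nat.card (Option {x : Quotient s // x ≠ Quotient.mk s b}) :=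
    Nat.card_congr (Equiv.optionSubtypeNe (Quotient.mk s b)).symm
  have := Fintype.ofFinite {x : Quotient s // x ≠ Quotient.mk s b}
  rw [h1, h2, Nat.card_eq_fintype_card, Nat.card_eq_fintype_card, Fintype.card_option]

theorem sameCycle_swap_mul [Finite α] [DecidableEq α] {σ : Equiv.Perm α} {a b : α}
    (hab : a ≠ b) (h : ¬ σ.SameCycle a b) : (Equiv.swap a b * σ).SameCycle a b := by
  have hex : ∃ k : ℕ, 0 < k ∧ (σ ^ k) a = a := by
    refine ⟨orderOf σ, ?_, by rw [pow_orderOf_eq_one]; rfl⟩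
    exact orderOf_pos σ
  classical
  let k := Nat.find hex
  obtain ⟨hkpos, hka⟩ : 0 < k ∧ (σ ^ k) a = a := Nat.find_spec hex
  have hmin : ∀ j, 0 < j → j < k → (σ ^ j) a ≠ a := fun j hj1 hj2 hj3 =>
    Nat.find_min hex hj2 ⟨hj1, hj3⟩
  have hnb : ∀ j : ℕ, (σ ^ j) a ≠ b := fun j hj => h ⟨(j : ℤ), by rw [zpow_natCast]; exact hj⟩
  have agree : ∀ j, j < k → ((Equiv.swap a b * σ) ^ j) a = (σ ^ j) a := by
    intro j
    induction j with
    | zero => simp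
    | succ i ih =>
        intro hik
        rw [pow_succ', Equiv.Perm.mul_apply, pow_succ', Equiv.Perm.mul_apply,
          ih (by omega), Equiv.Perm.mul_apply]
        have h1 : σ ((σ ^ i) a) ≠ a := by
          have := hmin (i + 1) (by omega) hik
          rwa [pow_succ', Equiv.Perm.mul_apply] at this
        have h2 : σ ((σ ^ i) a) ≠ b := by
          have := hnb (i + 1)
          rwa [pow_succ', Equiv.Perm.mul_apply] at this
        exact Equiv.swap_apply_of_ne_of_ne h1 h2
  obtain ⟨k', hk'⟩ : ∃ k', k = k' + 1 := ⟨k - 1, by omega⟩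
  refine ⟨(k : ℤ), ?_⟩
  rw [zpow_natCast, hk', pow_succ', Equiv.Perm.mul_apply, agree k' (by omega),
    Equiv.Perm.mul_apply]
  have : σ ((σ ^ k') a) = a := by
    have := hka; rwa [hk', pow_succ', Equiv.Perm.mul_apply] at this
  rw [this, Equiv.swap_apply_left]

theorem scSetoid_swap_mul [Finite α] [DecidableEq α] {σ : Equiv.Perm α} {a b : α}
    (hab : a ≠ b) (h : ¬ σ.SameCycle a b) :
    scSetoid (Equiv.swap a b * σ) = addEdge (scSetoid σ) a b := by
  have hM : (Equiv.swap a b * σ).SameCycle a b := sameCycle_swap_mul hab h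
  have happly : ∀ z, (Equiv.swap a b * σ) z = Equiv.swap a b (σ z) := fun z =>
    Equiv.Perm.mul_apply _ _ _
  have hsub : ∀ {x y : α}, σ.SameCycle x y → (Equiv.swap a b * σ).SameCycle x y := by
    intro x y hxy
    refine setoid_closed (scSetoid (Equiv.swap a b * σ)) σ ?_ hxy
    intro z
    show (Equiv.swap a b * σ).SameCycle z (σ z)
    have hz : (Equiv.swap a b * σ).SameCycle z ((Equiv.swap a b * σ) z) := ⟨1, by simp⟩
    rcases eq_or_ne (σ z) a with hza | hza
    · rw [happly, hza, Equiv.swap_apply_left] at hz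
      rw [hza]
      exact hz.trans hM.symm
    rcases eq_or_ne (σ z) b with hzb | hzb
    · rw [happly, hzb, Equiv.swap_apply_right] at hz
      rw [hzb]
      exact hz.trans hM
    · rwa [happly, Equiv.swap_apply_of_ne_of_ne hza hzb] at hz
  apply Setoid.ext
  intro x y
  constructor
  · intro hxy
    refine setoid_closed (addEdge (scSetoid σ) a b) (Equiv.swap a b * σ) ?_ hxy
    intro z
    have hz : (scSetoid σ).r z (σ z) := ⟨1, by simp⟩
    rcases eq_or_ne (σ z) a with hza | hza
    · rw [happly, hza, Equiv.swap_apply_left]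
      exact Or.inr (Or.inl ⟨by rwa [hza] at hz, (scSetoid σ).iseqv.refl b⟩)
    rcases eq_or_ne (σ z) b with hzb | hzb
    · rw [happly, hzb, Equiv.swap_apply_right]
      exact Or.inr (Or.inr ⟨by rwa [hzb] at hz, (scSetoid σ).iseqv.refl a⟩)
    · rw [happly, Equiv.swap_apply_of_ne_of_ne hza hzb]
      exact Or.inl hz
  · rintro (hxy | ⟨h1, h2⟩ | ⟨h1, h2⟩)
    · exact hsub hxy
    · exact (hsub (by exact h1)).trans (hM.trans (hsub (by exact h2)))
    · exact (hsub (by exact h1)).trans (hM.symm.trans (hsub (by exact h2)))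

theorem cycleCount_swap_mul [Finite α] [DecidableEq α] {σ : Equiv.Perm α} {a b : α}
    (hab : a ≠ b) (h : ¬ σ.SameCycle a b) :
    cycleCount (Equiv.swap a b * σ) + 1 = cycleCount σ := by
  rw [cycleCount_eq, cycleCount_eq, scSetoid_swap_mul hab h]
  exact card_quot_addEdge _ a b h

theorem cycleCount_split [Finite α] [DecidableEq α] {σ : Equiv.Perm α} {x : α}
    (hx : σ x ≠ x) :
    cycleCount σ + 1 = cycleCount (Equiv.swap x (σ x) * σ) := by
  have hfix : (Equiv.swap x (σ x) * σ) x = x := by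
    rw [Equiv.Perm.mul_apply, Equiv.swap_apply_right]
  have hnc : ¬ (Equiv.swap x (σ x) * σ).SameCycle x (σ x) := by
    intro hc
    obtain ⟨i, _, hi⟩ := hc.exists_pow_eq'
    rw [perm_pow_fix hfix i] at hi
    exact hx hi.symm
  have key : Equiv.swap x (σ x) * (Equiv.swap x (σ x) * σ) = σ := by
    rw [← mul_assoc, Equiv.swap_mul_self, one_mul]
  have := cycleCount_swap_mul (σ := Equiv.swap x (σ x) * σ) (Ne.symm hx) hnc
  rwa [key] at this

theorem cycleCount_one [Finite α] : cycleCount (1 : Equiv.Perm α) = Nat.card α := by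
  rw [cycleCount_eq]
  refine Nat.card_congr (Equiv.ofBijective
    (Quotient.lift (fun z : α => z) fun u v huv => ?_) ⟨?_, fun z => ⟨Quotient.mk _ z, rfl⟩⟩)
  · exact Equiv.Perm.sameCycle_one.mp huv
  · intro q1 q2
    induction q1 using Quotient.ind with | _ z1 =>
    induction q2 using Quotient.ind with | _ z2 =>
    intro h12
    exact Quotient.sound (Equiv.Perm.sameCycle_one.mpr h12)

theorem cycleCount_le_card [Finite α] (σ : Equiv.Perm α) : cycleCount σ ≤ Nat.card α := by
  rw [cycleCount_eq]
  exact Nat.card_le_card_of_surjective (Quotient.mk (scSetoid σ))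
    fun q => Quotient.inductionOn q fun z => ⟨z, rfl⟩

theorem eq_one_of_cycleCount [Finite α] {σ : Equiv.Perm α}
    (h : cycleCount σ = Nat.card α) : σ = 1 := by
  have hbij : Function.Bijective (Quotient.mk (scSetoid σ)) :=
    (Nat.bijective_iff_surjective_and_card _).mpr
      ⟨fun q => Quotient.inductionOn q fun z => ⟨z, rfl⟩, by rw [← cycleCount_eq, h]⟩
  ext x
  have : Quotient.mk (scSetoid σ) x = Quotient.mk (scSetoid σ) (σ x) :=
    Quotient.sound (⟨1, by simp⟩ : σ.SameCycle x (σ x))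
  have := hbij.injective this
  simp [← this]

theorem exists_swap_list [Finite α] [DecidableEq α] (σ : Equiv.Perm α) :
    ∃ L : List (α × α), (∀ p ∈ L, p.1 ≠ p.2) ∧
      σ = (L.map fun p => Equiv.swap p.1 p.2).prod ∧
      L.length + cycleCount σ = Nat.card α := by
  generalize hmeas : Nat.card α - cycleCount σ = d
  induction d generalizing σ with
  | zero =>
      have hle := cycleCount_le_card σ
      have hc : cycleCount σ = Nat.card α := by omega
      refine ⟨[], by simp, by simp [eq_one_of_cycleCount hc], by simpa using hc⟩
  | succ d ih =>
      have hne : σ ≠ 1 := by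
        rintro rfl
        rw [cycleCount_one] at hmeas
        omega
      have hex : ∃ x, σ x ≠ x := by
        by_contra hall
        push_neg at hall
        exact hne (Equiv.ext hall)
      obtain ⟨x, hx⟩ := hex
      have hsplit := cycleCount_split hx
      have hle := cycleCount_le_card (Equiv.swap x (σ x) * σ)
      obtain ⟨L, hL1, hL2, hL3⟩ := ih (Equiv.swap x (σ x) * σ) (by omega)
      refine ⟨(x, σ x) :: L, ?_, ?_, ?_⟩
      · rintro p hp
        rcases List.mem_cons.mp hp with rfl | hp
        · exact Ne.symm hx
        · exact hL1 p hp
      · rw [List.map_cons, List.prod_cons, ← hL2, ← mul_assoc, Equiv.swap_mul_self, one_mul]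
      · rw [List.length_cons]
        omega

theorem prod_swaps_rel [DecidableEq α] (s : Setoid α) (L : List (α × α))
    (hL : ∀ p ∈ L, s.r p.1 p.2) (z : α) :
    s.r z (((L.map fun p => Equiv.swap p.1 p.2).prod) z) := by
  induction L generalizing z with
  | nil => simpa using s.iseqv.refl z
  | cons p L ih =>
      rw [List.map_cons, List.prod_cons, Equiv.Perm.mul_apply]
      have h1 : s.r z (((L.map fun p => Equiv.swap p.1 p.2).prod) z) :=
        ih (fun q hq => hL q (List.mem_cons_of_mem p hq)) z
      set w := ((L.map fun p => Equiv.swap p.1 p.2).prod) z with hw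
      have hp : s.r p.1 p.2 := hL p List.mem_cons_self
      rcases eq_or_ne w p.1 with h | h
      · rw [h, Equiv.swap_apply_left]
        exact s.iseqv.trans h1 (by rw [h] at h1 ⊢; exact hp)
      rcases eq_or_ne w p.2 with h' | h'
      · rw [h', Equiv.swap_apply_right]
        exact s.iseqv.trans h1 (by rw [h'] ; exact s.iseqv.symm hp)
      · rw [Equiv.swap_apply_of_ne_of_ne h h']
        exact h1

/-- The equivalence generated by a list of edges. -/
def edgeSetoid : List (α × α) → Setoid α
  | [] => ⟨Eq, ⟨fun _ => rfl, fun h => h.symm, fun h1 h2 => h1.trans h2⟩⟩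
  | p :: L => addEdge (edgeSetoid L) p.1 p.2

theorem edgeSetoid_mono {L : List (α × α)} (p : α × α) {x y : α}
    (h : (edgeSetoid L).r x y) : (edgeSetoid (p :: L)).r x y := Or.inl h

theorem edgeSetoid_append {L1 L2 : List (α × α)} {x y : α}
    (h : (edgeSetoid L1).r x y) : (edgeSetoid (L2 ++ L1)).r x y := by
  induction L2 with
  | nil => exact h
  | cons p L2 ih => exact edgeSetoid_mono p ih

theorem edgeSetoid_edge {L : List (α × α)} {p : α × α} (hp : p ∈ L) :
    (edgeSetoid L).r p.1 p.2 := by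
  induction L with
  | nil => exact absurd hp List.not_mem_nil
  | cons q L ih =>
      rcases List.mem_cons.mp hp with rfl | hp
      · exact addEdge_rel_edge _ _ _
      · exact edgeSetoid_mono q (ih hp)

theorem card_quot_edgeSetoid [Finite α] (L : List (α × α)) :
    Nat.card α ≤ Nat.card (Quotient (edgeSetoid L)) + L.length := by
  induction L with
  | nil =>
      rw [List.length_nil]
      have : Nat.card (Quotient (edgeSetoid ([] : List (α × α)))) = Nat.card α := by
        refine Nat.card_congr (Equiv.ofBijective
          (Quotient.lift (fun z : α => z) fun u v huv => huv)
          ⟨?_, fun z => ⟨Quotient.mk _ z, rfl⟩⟩)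
        intro q1 q2
        induction q1 using Quotient.ind with | _ z1 =>
        induction q2 using Quotient.ind with | _ z2 =>
        intro h12
        exact Quotient.sound (h12 : (edgeSetoid []).r z1 z2)
      omega
  | cons p L ih =>
      rw [List.length_cons]
      show Nat.card α ≤ Nat.card (Quotient (addEdge (edgeSetoid L) p.1 p.2)) + (L.length + 1)
      by_cases hr : (edgeSetoid L).r p.1 p.2
      · rw [addEdge_eq_of_rel _ hr]
        omega
      · have := card_quot_addEdge (edgeSetoid L) p.1 p.2 hr
        omega

theorem sameCycle_of_geodesic [Finite α] [DecidableEq α] {b g : Equiv.Perm α}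
    (hg : cayley b g + cayley g 1 = cayley b 1) {x y : α} (hxy : g.SameCycle x y) :
    b.SameCycle x y := by
  obtain ⟨L1, hL11, hL12, hL13⟩ := exists_swap_list g
  obtain ⟨L2, hL21, hL22, hL23⟩ := exists_swap_list (b * g⁻¹)
  have hprod : b = ((L2 ++ L1).map fun p => Equiv.swap p.1 p.2).prod := by
    rw [List.map_append, List.prod_append, ← hL12, ← hL22, inv_mul_cancel_right]
  have hcay1 : cayley b g = Nat.card α - cycleCount (b * g⁻¹) := rfl
  have hcay2 : cayley g 1 = Nat.card α - cycleCount g := by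
    simp only [cayley, inv_one, mul_one]
  have hcay3 : cayley b 1 = Nat.card α - cycleCount b := by
    simp only [cayley, inv_one, mul_one]
  have hble := cycleCount_le_card b
  have hgle := cycleCount_le_card g
  have hbgle := cycleCount_le_card (b * g⁻¹)
  have hlen : (L2 ++ L1).length + cycleCount b = Nat.card α := by
    rw [List.length_append]
    omega
  set s := edgeSetoid (L2 ++ L1) with hs
  have hbs : ∀ {u v : α}, b.SameCycle u v → s.r u v := by
    intro u v huv
    refine setoid_closed s b ?_ huv
    intro z
    rw [hprod]
    exact prod_swaps_rel s (L2 ++ L1) (fun p hp => edgeSetoid_edge hp) z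
  have hcount := card_quot_edgeSetoid (α := α) (L2 ++ L1)
  rw [← hs] at hcount
  have hsurj : Function.Surjective
      (Quotient.map (fun z : α => z) (fun u v huv => hbs huv) :
        Quotient (scSetoid b) → Quotient s) := by
    intro q
    induction q using Quotient.ind with | _ z =>
    exact ⟨Quotient.mk _ z, rfl⟩
  have hcards : Nat.card (Quotient (scSetoid b)) = Nat.card (Quotient s) := by
    have h1 : Nat.card (Quotient s) ≤ Nat.card (Quotient (scSetoid b)) :=
      Nat.card_le_card_of_surjective _ hsurj
    have h2 : cycleCount b ≤ Nat.card (Quotient s) := by omega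
    rw [← cycleCount_eq] at h1 ⊢
    omega
  have hinj := ((Nat.bijective_iff_surjective_and_card _).mpr ⟨hsurj, hcards⟩).injective
  have hgs : s.r x y := by
    refine setoid_closed s g ?_ hxy
    intro z
    rw [hL12]
    exact prod_swaps_rel s L1
      (fun p hp => edgeSetoid_append (edgeSetoid_edge hp)) z
  have : Quotient.mk (scSetoid b) x = Quotient.mk (scSetoid b) y := by
    apply hinj
    exact Quotient.sound hgs
  exact Quotient.exact this

theorem cycleCount_inv [Finite α] (σ : Equiv.Perm α) : cycleCount σ⁻¹ = cycleCount σ := by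
  rw [cycleCount_eq, cycleCount_eq]
  exact Nat.card_congr (Quotient.congrRight fun u v => Equiv.Perm.sameCycle_inv)

theorem cycleCount_conj_s15 [Finite α] (π σ : Equiv.Perm α) :
    cycleCount (π * σ * π⁻¹) = cycleCount σ := by
  rw [cycleCount_eq, cycleCount_eq]
  refine (Nat.card_congr (Quotient.congr π fun u v => ?_)).symm
  show σ.SameCycle u v ↔ (π * σ * π⁻¹).SameCycle (π u) (π v)
  rw [Equiv.Perm.sameCycle_conj]
  simp [Equiv.Perm.inv_def]

end General

section Specific

theorem div_block_helper {q x B : ℕ} (hB : 0 < B) (hx : x < B) : (q * B + x) / B = q := by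
  rw [add_comm, Nat.add_mul_div_right _ _ hB, Nat.div_eq_of_lt hx, zero_add]


theorem zmod_repr {N : ℕ} [NeZero N] (B k : ℕ) (hB : 0 < B) (hBk : B * k = N) (z : ZMod N) :
    ∃ q r : ℕ, q < k ∧ r < B ∧ z = ((q * B + r : ℕ) : ZMod N) ∧ z.val = q * B + r := by
  have hzlt : z.val < N := ZMod.val_lt z
  have hdm : B * (z.val / B) + z.val % B = z.val := Nat.div_add_mod z.val B
  have hqlt : z.val / B < k := by
    have hN : k * B = N := by rw [mul_comm]; exact hBk
    rw [Nat.div_lt_iff_lt_mul hB, hN]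
    exact hzlt
  have heq : z.val / B * B + z.val % B = z.val := by rw [mul_comm]; exact hdm
  refine ⟨z.val / B, z.val % B, hqlt, Nat.mod_lt _ hB, ?_, by omega⟩
  conv_lhs => rw [← ZMod.natCast_rightInverse z]
  rw [heq]

theorem block_cycles {N : ℕ} [NeZero N] (σ : Equiv.Perm (ZMod N)) (B k : ℕ)
    (hB : 0 < B) (hk : 0 < k) (hBk : B * k = N)
    (hσ : ∀ q r : ℕ, r < B →
      σ ((q * B + r : ℕ) : ZMod N) = ((q * B + (r + 1) % B : ℕ) : ZMod N)) :
    (∀ z : ZMod N, (σ z).val / B = z.val / B) ∧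
    (∀ z w : ZMod N, σ.SameCycle z w ↔ z.val / B = w.val / B) ∧
    cycleCount σ = k := by
  have hval : ∀ q r : ℕ, q < k → r < B → (((q * B + r : ℕ) : ZMod N)).val = q * B + r := by
    intro q r hq hr
    apply ZMod.val_cast_of_lt
    calc q * B + r < (q + 1) * B := by nlinarith
    _ ≤ k * B := Nat.mul_le_mul_right _ (by omega)
    _ = N := by rw [mul_comm]; exact hBk
  have hrepr : ∀ z : ZMod N, ∃ q r : ℕ, q < k ∧ r < B ∧
      z = ((q * B + r : ℕ) : ZMod N) ∧ z.val = q * B + r := by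
    intro z
    have hzlt : z.val < N := ZMod.val_lt z
    have hdm : B * (z.val / B) + z.val % B = z.val := Nat.div_add_mod z.val B
    have hqlt : z.val / B < k := by
      have hN : k * B = N := by rw [mul_comm]; exact hBk
      rw [Nat.div_lt_iff_lt_mul hB, hN]
      exact hzlt
    have heq : z.val / B * B + z.val % B = z.val := by rw [mul_comm]; exact hdm
    refine ⟨z.val / B, z.val % B, hqlt, Nat.mod_lt _ hB, ?_, by omega⟩
    conv_lhs => rw [← ZMod.natCast_rightInverse z]
    rw [heq]
  have hblk : ∀ z : ZMod N, (σ z).val / B = z.val / B := by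
    intro z
    obtain ⟨q, r, hq, hr, hz, hzval⟩ := hrepr z
    rw [hz, hσ q r hr, hval q _ hq (Nat.mod_lt _ hB), hval q r hq hr,
      div_block_helper hB (Nat.mod_lt _ hB), div_block_helper hB hr]
  have hfwd : ∀ z w : ZMod N, σ.SameCycle z w → z.val / B = w.val / B := by
    intro z w hzw
    exact setoid_closed ⟨fun x y => x.val / B = y.val / B,
      ⟨fun x => rfl, fun h => h.symm, fun h1 h2 => h1.trans h2⟩⟩ σ
      (fun u => (hblk u).symm) hzw
  have hchain : ∀ q r : ℕ, q < k → r < B →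
      σ.SameCycle ((q * B : ℕ) : ZMod N) ((q * B + r : ℕ) : ZMod N) := by
    intro q r hq
    induction r with
    | zero =>
        intro _
        rw [add_zero]
    | succ r ih =>
        intro hr
        have h1 : σ.SameCycle ((q * B : ℕ) : ZMod N) ((q * B + r : ℕ) : ZMod N) :=
          ih (by omega)
        have h2 : σ ((q * B + r : ℕ) : ZMod N) = ((q * B + (r + 1) : ℕ) : ZMod N) := by
          rw [hσ q r (by omega), Nat.mod_eq_of_lt hr]
        exact h1.trans (by rw [← h2]; exact ⟨1, by simp⟩)
  have hbwd : ∀ z w : ZMod N, z.val / B = w.val / B → σ.SameCycle z w := by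
    intro z w h
    obtain ⟨q, r, hq, hr, hz, hzval⟩ := hrepr z
    obtain ⟨q', s, hq', hs, hw, hwval⟩ := hrepr w
    have : q = q' := by
      rw [hzval, hwval, div_block_helper hB hr, div_block_helper hB hs] at h
      exact h
    subst this
    rw [hz, hw]
    exact (hchain q r hq hr).symm.trans (hchain q s hq hs)
  refine ⟨hblk, fun z w => ⟨hfwd z w, hbwd z w⟩, ?_⟩
  rw [cycleCount_eq]
  refine Nat.card_eq_of_equiv_fin
    (Equiv.ofBijective (Quotient.lift (fun z : ZMod N => (⟨z.val / B, by
      have hzlt : z.val < N := ZMod.val_lt z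
      rw [Nat.div_lt_iff_lt_mul hB, mul_comm]
      omega⟩ : Fin k)) fun u v huv => ?_) ⟨?_, ?_⟩)
  · exact Fin.ext (hfwd u v huv)
  · intro q1 q2
    induction q1 using Quotient.ind with | _ z1 =>
    induction q2 using Quotient.ind with | _ z2 =>
    intro h12
    exact Quotient.sound (hbwd z1 z2 (congrArg Fin.val h12))
  · intro j
    refine ⟨Quotient.mk _ ((j.1 * B : ℕ) : ZMod N), ?_⟩
    apply Fin.ext
    show (((j.1 * B : ℕ) : ZMod N)).val / B = j.1
    have hv := hval j.1 0 j.2 hB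
    rw [add_zero] at hv
    rw [hv]
    have h0 := div_block_helper (q := j.1) (x := 0) hB hB
    rw [add_zero] at h0
    exact h0

end Specific


set_option maxHeartbeats 1000000 in
/-- `X` is the unique element of `Γ(g_A,e) ∩ Γ(g_B,e)` of maximal distance `n(m-2)`
from the identity; equivalently of minimal distance `n` from `g_A`. -/
theorem stmt15 (n m : ℕ) (hn : 2 ≤ n) (hm : 2 ≤ m) (hme : Even m)
    (gB gA X : Equiv.Perm (ZMod (m * n)))
(hgB : ∀ q r : ℕ, r < m →
      gB ((q * m + r : ℕ) : ZMod (m * n)) = ((q * m + (r + 1) % m : ℕ) : ZMod (m * n)))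
    (hgA : gA = Equiv.addLeft ((m / 2 : ℕ) : ZMod (m * n)) * gB *
      (Equiv.addLeft ((m / 2 : ℕ) : ZMod (m * n)))⁻¹)
(hX : ∀ q r : ℕ, r < m / 2 →
      X ((q * (m / 2) + r : ℕ) : ZMod (m * n)) =
        ((q * (m / 2) + (r + 1) % (m / 2) : ℕ) : ZMod (m * n)))
    :
    ∀ g ∈ geodesic gA 1 ∩ geodesic gB 1,
      (cayley g 1 ≤ n * (m - 2) ∧ (cayley g 1 = n * (m - 2) ↔ g = X)) ∧
      (n ≤ cayley g gA ∧ (cayley g gA = n ↔ g = X)) := by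
  classical
  have hu2 : m / 2 * 2 = m := Nat.div_two_mul_two_of_even hme
  set u := m / 2 with hu
  have hupos : 0 < u := by omega
  have hum : u < m := by omega
  haveI : NeZero (m * n) := ⟨by positivity⟩
  have hcard : Nat.card (ZMod (m * n)) = m * n := Nat.card_zmod _
  have hmn : n * m = m * n := Nat.mul_comm n m
  -- block structure of gB and X
  obtain ⟨hblkB, hscB, hcB⟩ := block_cycles gB m n (by omega) (by omega) rfl hgB
  have huN : u * (2 * n) = m * n := by
    calc u * (2 * n) = u * 2 * n := by ring
    _ = m * n := by rw [hu2]
  obtain ⟨hblkX, hscX, hcX⟩ := block_cycles X u (2 * n) hupos (by omega) huN hX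
  -- gA cycle count and same-cycle relation
  have hcA : cycleCount gA = n := by rw [hgA, cycleCount_conj_s15]; exact hcB
  have hπinv : ∀ x : ZMod (m * n),
      (Equiv.addLeft ((u : ℕ) : ZMod (m * n)))⁻¹ x = -((u : ℕ) : ZMod (m * n)) + x := by
    intro x
    rfl
  have hscA : ∀ z w : ZMod (m * n), gA.SameCycle z w ↔
      gB.SameCycle (-((u : ℕ) : ZMod (m * n)) + z) (-((u : ℕ) : ZMod (m * n)) + w) := by
    intro z w
    rw [hgA, Equiv.Perm.sameCycle_conj, hπinv, hπinv]
  -- value computations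
  have hmul_le : ∀ a b : ℕ, a ≤ b → a * m ≤ b * m := fun a b h => Nat.mul_le_mul_right m h
  have hvm : ∀ q r : ℕ, q < n → r < m → (((q * m + r : ℕ) : ZMod (m * n))).val = q * m + r := by
    intro q r hq hr
    apply ZMod.val_cast_of_lt
    have h1 : (q + 1) * m ≤ n * m := hmul_le _ _ (by omega)
    have h2 : (q + 1) * m = q * m + m := by ring
    omega
  have huleN : u ≤ m * n := by nlinarith
  have hshift : ∀ T : ℕ, ((T + (m * n - u) : ℕ) : ZMod (m * n)) =
      -((u : ℕ) : ZMod (m * n)) + (T : ZMod (m * n)) := by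
    intro T
    rw [Nat.cast_add, Nat.cast_sub huleN, ZMod.natCast_self]
    ring
  have hval_shift : ∀ q r : ℕ, q < n → r < m →
      (-((u : ℕ) : ZMod (m * n)) + ((q * m + r : ℕ) : ZMod (m * n))).val =
        if u ≤ r then q * m + (r - u)
        else (if q = 0 then (n - 1) * m + (u + r) else (q - 1) * m + (u + r)) := by
    intro q r hq hr
    rw [← hshift, ZMod.val_natCast]
    have hqm1 : (q + 1) * m ≤ n * m := hmul_le _ _ (by omega)
    have hqm2 : (q + 1) * m = q * m + m := by ring
    split_ifs with h1 h2
    · have he : q * m + r + (m * n - u) = (q * m + (r - u)) + m * n := by omega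
      rw [he, Nat.add_mod_right]
      apply Nat.mod_eq_of_lt
      omega
    · -- r < u, q = 0
      subst h2
      have hnm1 : (n - 1) * m + m = n * m := by
        have hh : n - 1 + 1 = n := by omega
        calc (n - 1) * m + m = (n - 1 + 1) * m := by ring
        _ = n * m := by rw [hh]
      have he : 0 * m + r + (m * n - u) = (n - 1) * m + (u + r) := by omega
      rw [he]
      apply Nat.mod_eq_of_lt
      omega
    · -- r < u, q ≥ 1
      have hq1 : q - 1 + 1 = q := by omega
      have hqm3 : (q - 1) * m + m = q * m := by
        calc (q - 1) * m + m = (q - 1 + 1) * m := by ring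
        _ = q * m := by rw [hq1]
      have he : q * m + r + (m * n - u) = ((q - 1) * m + (u + r)) + m * n := by omega
      rw [he, Nat.add_mod_right]
      apply Nat.mod_eq_of_lt
      omega
  have hhval : ∀ q r : ℕ, r < m → (q * m + r) / u = (if r < u then 2 * q else 2 * q + 1) := by
    intro q r hr
    have hqm : q * m = 2 * q * u := by
      calc q * m = q * (u * 2) := by rw [hu2]
      _ = 2 * q * u := by ring
    split_ifs with h
    · rw [hqm]; exact div_block_helper hupos h
    · have he : q * m + r = (2 * q + 1) * u + (r - u) := by
        have : (2 * q + 1) * u = 2 * q * u + u := by ring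
        omega
      rw [he]; exact div_block_helper hupos (by omega)
  -- blocks and half blocks
  have hdiv2 : ∀ z : ZMod (m * n), z.val / m = z.val / u / 2 := by
    intro z
    rw [Nat.div_div_eq_div_mul, hu2]
  have hsamehalf : ∀ z w : ZMod (m * n), gB.SameCycle z w → gA.SameCycle z w →
      z.val / u = w.val / u := by
    intro z w hB' hA'
    obtain ⟨q, r, hq, hr, hz, hzval⟩ := zmod_repr m n (by omega) rfl z
    obtain ⟨q', s, hq', hs, hw, hwval⟩ := zmod_repr m n (by omega) rfl w
    have hqq : q = q' := by
      have := (hscB z w).mp hB'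
      rw [hzval, hwval, div_block_helper (by omega) hr, div_block_helper (by omega) hs] at this
      exact this
    subst hqq
    have hA2 : (-((u : ℕ) : ZMod (m * n)) + z).val / m = (-((u : ℕ) : ZMod (m * n)) + w).val / m := by
      have := (hscB _ _).mp ((hscA z w).mp hA')
      exact this
    rw [hz, hw, hval_shift q r hq hr, hval_shift q s hq hs] at hA2
    rw [hzval, hwval, hhval q r hr, hhval q s hs]
    -- now case analysis
    by_cases h1 : r < u <;> by_cases h2 : s < u
    · rw [if_pos h1, if_pos h2]
    · -- r < u ≤ s : contradiction
      exfalso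
      rw [if_neg (show ¬ u ≤ r by omega), if_pos (show u ≤ s by omega)] at hA2
      rw [div_block_helper (by omega) (show s - u < m by omega)] at hA2
      by_cases hq0 : q = 0
      · rw [if_pos hq0] at hA2
        rw [div_block_helper (by omega) (show u + r < m by omega)] at hA2
        omega
      · rw [if_neg hq0] at hA2
        rw [div_block_helper (by omega) (show u + r < m by omega)] at hA2
        omega
    · -- s < u ≤ r : contradiction
      exfalso
      rw [if_pos (show u ≤ r by omega), if_neg (show ¬ u ≤ s by omega)] at hA2
      rw [div_block_helper (by omega) (show r - u < m by omega)] at hA2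
      by_cases hq0 : q = 0
      · rw [if_pos hq0] at hA2
        rw [div_block_helper (by omega) (show u + s < m by omega)] at hA2
        omega
      · rw [if_neg hq0] at hA2
        rw [div_block_helper (by omega) (show u + s < m by omega)] at hA2
        omega
    · rw [if_neg h1, if_neg h2]
  -- main part
  intro g hg
  have hgeoA : cayley gA g + cayley g 1 = cayley gA 1 := hg.1
  have hgeoB : cayley gB g + cayley g 1 = cayley gB 1 := hg.2
  have hGB : ∀ {z w : ZMod (m * n)}, g.SameCycle z w → gB.SameCycle z w :=
    fun h => sameCycle_of_geodesic hgeoB h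
  have hGA : ∀ {z w : ZMod (m * n)}, g.SameCycle z w → gA.SameCycle z w :=
    fun h => sameCycle_of_geodesic hgeoA h
  have hghalf : ∀ z w : ZMod (m * n), g.SameCycle z w → z.val / u = w.val / u :=
    fun z w h => hsamehalf z w (hGB h) (hGA h)
  have hhalf_lt : ∀ z : ZMod (m * n), z.val / u < 2 * n := by
    intro z
    have hN : 2 * n * u = m * n := by rw [mul_comm (2*n) u]; exact huN
    rw [Nat.div_lt_iff_lt_mul hupos, hN]
    exact ZMod.val_lt z
  have hcg_ge : 2 * n ≤ cycleCount g := by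
    rw [cycleCount_eq]
    have hsurj : Function.Surjective (Quotient.lift
        (fun z : ZMod (m * n) => (⟨z.val / u, hhalf_lt z⟩ : Fin (2 * n)))
        (fun z w (hzw : (scSetoid g).r z w) => Fin.ext (hghalf z w hzw))) := by
      intro j
      refine ⟨Quotient.mk _ ((j.1 * u : ℕ) : ZMod (m * n)), ?_⟩
      apply Fin.ext
      show (((j.1 * u : ℕ) : ZMod (m * n))).val / u = j.1
      have hlt : j.1 * u + 0 < m * n := by
        have h1 : (j.1 + 1) * u ≤ 2 * n * u := Nat.mul_le_mul_right u (by omega)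
        have h2 : (j.1 + 1) * u = j.1 * u + u := by ring
        have h3 : 2 * n * u = m * n := by rw [mul_comm (2*n) u]; exact huN
        omega
      rw [add_zero] at hlt
      rw [ZMod.val_cast_of_lt hlt]
      have h0 := div_block_helper (q := j.1) (x := 0) hupos hupos
      rw [add_zero] at h0
      exact h0
    have := Nat.card_le_card_of_surjective _ hsurj
    simpa using this
  -- cycle count bounds & cayley formulas
  have hcgle := cycleCount_le_card g
  have hcAgle := cycleCount_le_card (gA * g⁻¹)
  have hcBgle := cycleCount_le_card (gB * g⁻¹)
  rw [hcard] at hcgle hcAgle hcBgle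
  have hcayg1 : cayley g 1 = m * n - cycleCount g := by
    simp only [cayley, inv_one, mul_one, hcard]
  have hcayAg : cayley gA g = m * n - cycleCount (gA * g⁻¹) := by
    simp only [cayley, hcard]
  have hcayBg : cayley gB g = m * n - cycleCount (gB * g⁻¹) := by
    simp only [cayley, hcard]
  have hcayA1 : cayley gA 1 = m * n - n := by
    simp only [cayley, inv_one, mul_one, hcard, hcA]
  have hcayB1 : cayley gB 1 = m * n - n := by
    simp only [cayley, inv_one, mul_one, hcard, hcB]
  have hcaygA : cayley g gA = m * n - cycleCount (gA * g⁻¹) := by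
    have hinv : (g * gA⁻¹)⁻¹ = gA * g⁻¹ := by rw [mul_inv_rev, inv_inv]
    simp only [cayley, hcard]
    rw [← hinv, cycleCount_inv]
  have hNn : n ≤ m * n := by nlinarith
  have h2nN : 2 * n ≤ m * n := by nlinarith
  have hdist : n * (m - 2) = m * n - 2 * n := by
    have h1 : n * (m - 2) + n * 2 = n * m := by
      rw [← Nat.mul_add]
      congr 1
      omega
    omega
  -- the uniqueness statement
  have huniq : cycleCount g = 2 * n → g = X := by
    intro hc2
    set h := gB * g⁻¹ with hhdef
    have hch : cycleCount h = m * n - n := by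
      rw [hcayBg, hcayg1, hcayB1] at hgeoB
      omega
    have hginvhalf : ∀ z : ZMod (m * n), (g⁻¹ z).val / u = z.val / u := by
      intro z
      exact hghalf _ _ (⟨1, by simp⟩ : g.SameCycle (g⁻¹ z) z)
    have hginvblk : ∀ z : ZMod (m * n), (g⁻¹ z).val / m = z.val / m := by
      intro z
      rw [hdiv2, hdiv2, hginvhalf]
    have hhblk : ∀ z : ZMod (m * n), (h z).val / m = z.val / m := by
      intro z
      rw [hhdef, Equiv.Perm.mul_apply, hblkB, hginvblk]
    have hmoved : ∀ z : ZMod (m * n), h z ≠ z → h (h z) ≠ h z := by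
      intro z hz heq
      exact hz (Equiv.injective h heq)
    set Mv := Finset.univ.filter (fun z : ZMod (m * n) => ¬ (h z = z)) with hMvdef
    set Fx := Finset.univ.filter (fun z : ZMod (m * n) => h z = z) with hFxdef
    have hFM : Fx.card + Mv.card = m * n := by
      rw [hFxdef, hMvdef, Finset.card_filter_add_card_filter_not,
        Finset.card_univ, ZMod.card]
    -- injection bounding the number of cycles of h from above
    have hinj2 : cycleCount h * 2 ≤ m * n + Fx.card := by
      let Φ : Quotient (scSetoid h) × Bool → (ZMod (m * n)) ⊕ {z : ZMod (m * n) // h z = z} :=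
        fun p => match p.2 with
          | true => Sum.inl p.1.out
          | false => if hf : h p.1.out = p.1.out then Sum.inr ⟨p.1.out, hf⟩
              else Sum.inl (h p.1.out)
      have houteq : ∀ c1 c2 : Quotient (scSetoid h), c1.out = c2.out → c1 = c2 := by
        intro c1 c2 hc
        rw [← Quotient.out_eq c1, ← Quotient.out_eq c2, hc]
      have hsc1 : ∀ c : Quotient (scSetoid h), h.SameCycle c.out (h c.out) := fun c => ⟨1, by simp⟩
      have hΦinj : Function.Injective Φ := by
        rintro ⟨c1, t1⟩ ⟨c2, t2⟩ heq
        cases t1 <;> cases t2 <;> simp only [Φ] at heq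
        · -- false false
          by_cases hf1 : h c1.out = c1.out <;> by_cases hf2 : h c2.out = c2.out
          · rw [dif_pos hf1, dif_pos hf2] at heq
            simp only [Sum.inr.injEq, Subtype.mk.injEq] at heq
            rw [houteq c1 c2 heq]
          · rw [dif_pos hf1, dif_neg hf2] at heq
            simp at heq
          · rw [dif_neg hf1, dif_pos hf2] at heq
            simp at heq
          · rw [dif_neg hf1, dif_neg hf2] at heq
            simp only [Sum.inl.injEq] at heq
            rw [houteq c1 c2 (Equiv.injective h heq)]
        · -- false true
          exfalso
          by_cases hf1 : h c1.out = c1.out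
          · rw [dif_pos hf1] at heq
            simp at heq
          · rw [dif_neg hf1] at heq
            simp only [Sum.inl.injEq] at heq
            have hcc : c1 = c2 := by
              rw [← Quotient.out_eq c1, ← Quotient.out_eq c2]
              refine Quotient.sound ?_
              show h.SameCycle c1.out c2.out
              rw [← heq]
              exact hsc1 c1
            have hout12 : c1.out = c2.out := by rw [hcc]
            exact hf1 (heq.trans hout12.symm)
        · -- true false
          exfalso
          by_cases hf2 : h c2.out = c2.out
          · rw [dif_pos hf2] at heq
            simp at heq
          · rw [dif_neg hf2] at heq
            simp only [Sum.inl.injEq] at heq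
            have hcc : c1 = c2 := by
              rw [← Quotient.out_eq c1, ← Quotient.out_eq c2]
              refine Quotient.sound ?_
              show h.SameCycle c1.out c2.out
              rw [heq]
              exact (hsc1 c2).symm
            have hout12 : c1.out = c2.out := by rw [hcc]
            exact hf2 (heq.symm.trans hout12)
        · -- true true
          simp only [Sum.inl.injEq] at heq
          rw [houteq c1 c2 heq]
      have hcardle := Nat.card_le_card_of_injective Φ hΦinj
      rw [Nat.card_prod, Nat.card_sum, ← cycleCount_eq, hcard] at hcardle
      have hb2 : Nat.card Bool = 2 := by
        rw [Nat.card_eq_fintype_card, Fintype.card_bool]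
      have hsub : Nat.card {z : ZMod (m * n) // h z = z} = Fx.card := by
        rw [Nat.card_eq_fintype_card, Fintype.card_subtype, hFxdef]
      rw [hb2, hsub] at hcardle
      omega
    have hMvle : Mv.card ≤ 2 * n := by omega
    -- each block contains a non-fixed point of h
    have hmovedblk : ∀ q, q < n →
        h (((q * m + u : ℕ) : ZMod (m * n))) ≠ ((q * m + u : ℕ) : ZMod (m * n)) := by
      intro q hq hfix
      have h0 : gB (g⁻¹ (((q * m + u : ℕ) : ZMod (m * n)))) = ((q * m + u : ℕ) : ZMod (m * n)) := by
        rw [← Equiv.Perm.mul_apply, ← hhdef]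
        exact hfix
      have h1 : g⁻¹ (((q * m + u : ℕ) : ZMod (m * n))) = gB⁻¹ (((q * m + u : ℕ) : ZMod (m * n))) := by
        calc g⁻¹ (((q * m + u : ℕ) : ZMod (m * n)))
            = gB⁻¹ (gB (g⁻¹ (((q * m + u : ℕ) : ZMod (m * n))))) :=
              (Equiv.symm_apply_apply gB _).symm
        _ = gB⁻¹ (((q * m + u : ℕ) : ZMod (m * n))) := by rw [h0]
      have h2 : gB (((q * m + (u - 1) : ℕ) : ZMod (m * n))) = ((q * m + u : ℕ) : ZMod (m * n)) := by
        rw [hgB q (u - 1) (by omega)]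
        have hmod : (u - 1 + 1) % m = u := by
          rw [show u - 1 + 1 = u by omega, Nat.mod_eq_of_lt hum]
        rw [hmod]
      have h3 : gB⁻¹ (((q * m + u : ℕ) : ZMod (m * n))) = ((q * m + (u - 1) : ℕ) : ZMod (m * n)) := by
        rw [← h2]; exact Equiv.symm_apply_apply gB _
      have h4 := hginvhalf (((q * m + u : ℕ) : ZMod (m * n)))
      rw [h1, h3, hvm q (u - 1) hq (by omega), hvm q u hq hum,
        hhval q (u - 1) (by omega), hhval q u hum,
        if_pos (show u - 1 < u by omega), if_neg (show ¬ u < u by omega)] at h4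
      omega
    have hblk_lt : ∀ z : ZMod (m * n), z.val / m < n := by
      intro z
      rw [Nat.div_lt_iff_lt_mul (show 0 < m by omega), hmn]
      exact ZMod.val_lt z
    have hfiber : Mv.card = ∑ q ∈ Finset.range n, (Mv.filter (fun z => z.val / m = q)).card :=
      Finset.card_eq_sum_card_fiberwise (fun z _ => Finset.mem_range.mpr (hblk_lt z))
    have htwo_le : ∀ q ∈ Finset.range n, 2 ≤ (Mv.filter (fun z => z.val / m = q)).card := by
      intro q hq
      rw [Finset.mem_range] at hq
      have hz0m : h (((q * m + u : ℕ) : ZMod (m * n))) ≠ ((q * m + u : ℕ) : ZMod (m * n)) :=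
        hmovedblk q hq
      have hz0blk : (((q * m + u : ℕ) : ZMod (m * n))).val / m = q := by
        rw [hvm q u hq hum, div_block_helper (by omega) hum]
      have hin1 : ((q * m + u : ℕ) : ZMod (m * n)) ∈ Mv.filter (fun z => z.val / m = q) :=
        Finset.mem_filter.mpr ⟨Finset.mem_filter.mpr ⟨Finset.mem_univ _, hz0m⟩, hz0blk⟩
      have hin2 : h (((q * m + u : ℕ) : ZMod (m * n))) ∈ Mv.filter (fun z => z.val / m = q) :=
        Finset.mem_filter.mpr ⟨Finset.mem_filter.mpr ⟨Finset.mem_univ _, hmoved _ hz0m⟩,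
          by rw [hhblk]; exact hz0blk⟩
      have hsubset : ({((q * m + u : ℕ) : ZMod (m * n)),
          h (((q * m + u : ℕ) : ZMod (m * n)))} : Finset (ZMod (m * n))) ⊆
          Mv.filter (fun z => z.val / m = q) := by
        intro w hw
        rcases Finset.mem_insert.mp hw with rfl | hw
        · exact hin1
        · rw [Finset.mem_singleton.mp hw]; exact hin2
      calc 2 = ({((q * m + u : ℕ) : ZMod (m * n)),
          h (((q * m + u : ℕ) : ZMod (m * n)))} : Finset (ZMod (m * n))).card :=
            (Finset.card_pair (Ne.symm hz0m)).symm
      _ ≤ _ := Finset.card_le_card hsubset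
    have hsumge : 2 * n ≤ Mv.card := by
      rw [hfiber]
      calc 2 * n = ∑ _q ∈ Finset.range n, 2 := by
            rw [Finset.sum_const, Finset.card_range, smul_eq_mul, mul_comm]
      _ ≤ _ := Finset.sum_le_sum htwo_le
    have hMveq : Mv.card = 2 * n := le_antisymm hMvle hsumge
    have hfibtwo : ∀ q ∈ Finset.range n, (Mv.filter (fun z => z.val / m = q)).card = 2 := by
      have hsum2 : ∑ _q ∈ Finset.range n, (2 : ℕ) =
          ∑ q ∈ Finset.range n, (Mv.filter (fun z => z.val / m = q)).card := by
        rw [← hfiber, Finset.sum_const, Finset.card_range, smul_eq_mul, mul_comm, hMveq]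
      intro q hq
      exact ((Finset.sum_eq_sum_iff_of_le htwo_le).mp hsum2 q hq).symm
    -- block structure of h : one transposition per block
    have hBQ : ∀ q, q < n → ∃ b : ZMod (m * n), b.val / m = q ∧
        b ≠ ((q * m + u : ℕ) : ZMod (m * n)) ∧
        h (((q * m + u : ℕ) : ZMod (m * n))) = b ∧
        h b = ((q * m + u : ℕ) : ZMod (m * n)) ∧
        ∀ z : ZMod (m * n), z.val / m = q → z ≠ ((q * m + u : ℕ) : ZMod (m * n)) → z ≠ b →
          h z = z := by
      intro q hq
      have ham : h (((q * m + u : ℕ) : ZMod (m * n))) ≠ ((q * m + u : ℕ) : ZMod (m * n)) :=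
        hmovedblk q hq
      have hablk : (((q * m + u : ℕ) : ZMod (m * n))).val / m = q := by
        rw [hvm q u hq hum, div_block_helper (by omega) hum]
      have hbblk : (h (((q * m + u : ℕ) : ZMod (m * n)))).val / m = q := by
        rw [hhblk]; exact hablk
      have hbm : h (h (((q * m + u : ℕ) : ZMod (m * n)))) ≠ h (((q * m + u : ℕ) : ZMod (m * n))) :=
        hmoved _ ham
      have hpair_eq : ({((q * m + u : ℕ) : ZMod (m * n)),
          h (((q * m + u : ℕ) : ZMod (m * n)))} : Finset (ZMod (m * n))) =
          Mv.filter (fun z => z.val / m = q) := by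
        apply Finset.eq_of_subset_of_card_le
        · intro w hw
          rcases Finset.mem_insert.mp hw with rfl | hw
          · exact Finset.mem_filter.mpr ⟨Finset.mem_filter.mpr ⟨Finset.mem_univ _, ham⟩, hablk⟩
          · rw [Finset.mem_singleton.mp hw]
            exact Finset.mem_filter.mpr ⟨Finset.mem_filter.mpr ⟨Finset.mem_univ _, hmoved _ ham⟩,
              hbblk⟩
        · rw [hfibtwo q (Finset.mem_range.mpr hq), Finset.card_pair (Ne.symm ham)]
      have hhb : h (h (((q * m + u : ℕ) : ZMod (m * n)))) = ((q * m + u : ℕ) : ZMod (m * n)) := by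
        have hbmem : h (h (((q * m + u : ℕ) : ZMod (m * n)))) ∈
            Mv.filter (fun z => z.val / m = q) :=
          Finset.mem_filter.mpr ⟨Finset.mem_filter.mpr ⟨Finset.mem_univ _, hmoved _ hbm⟩,
            by rw [hhblk]; exact hbblk⟩
        rw [← hpair_eq] at hbmem
        rcases Finset.mem_insert.mp hbmem with heq | heq
        · exact heq
        · exact absurd (Finset.mem_singleton.mp heq) hbm
      refine ⟨h (((q * m + u : ℕ) : ZMod (m * n))), hbblk, ham, rfl, hhb, ?_⟩
      intro z hzq hza hzb
      by_contra hmz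
      have hzmem : z ∈ Mv.filter (fun z => z.val / m = q) :=
        Finset.mem_filter.mpr ⟨Finset.mem_filter.mpr ⟨Finset.mem_univ _, hmz⟩, hzq⟩
      rw [← hpair_eq] at hzmem
      rcases Finset.mem_insert.mp hzmem with heq | heq
      · exact hza heq
      · exact hzb (Finset.mem_singleton.mp heq)
    have hinvol : ∀ z : ZMod (m * n), h (h z) = z := by
      intro z
      obtain ⟨b, hbblk, hbne, hab, hba, hfixes⟩ := hBQ (z.val / m) (hblk_lt z)
      by_cases h1 : z = ((z.val / m * m + u : ℕ) : ZMod (m * n))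
      · rw [h1, hab, hba]
      · by_cases h2 : z = b
        · rw [h2, hba, hab]
        · rw [hfixes z rfl h1 h2, hfixes z rfl h1 h2]
    have hg_eq : ∀ z : ZMod (m * n), g z = h (gB z) := by
      intro z
      have h0 : h⁻¹ * gB = g := by
        rw [hhdef, mul_inv_rev, inv_inv, mul_assoc, inv_mul_cancel, mul_one]
      rw [← h0, Equiv.Perm.mul_apply]
      apply Equiv.injective h
      rw [show h (h⁻¹ (gB z)) = gB z from Equiv.apply_symm_apply h _, hinvol]
    have hqmu : ∀ q : ℕ, q * m = 2 * q * u := by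
      intro q
      calc q * m = q * (u * 2) := by rw [hu2]
      _ = 2 * q * u := by ring
    -- the final computation : g and X agree on every point
    have hfinal : ∀ q r : ℕ, q < n → r < m →
        g (((q * m + r : ℕ) : ZMod (m * n))) = X (((q * m + r : ℕ) : ZMod (m * n))) := by
      intro q r hq hr
      obtain ⟨b, hbblk, hbne, hab, hba, hfixes⟩ := hBQ q hq
      have hv0 : (((q * m : ℕ) : ZMod (m * n))).val = q * m := hvm q 0 hq (by omega)
      have hblk0 : (((q * m : ℕ) : ZMod (m * n))).val / m = q := by
        rw [hv0]
        have := div_block_helper (q := q) (x := 0) (show 0 < m by omega) (show 0 < m by omega)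
        rwa [add_zero] at this
      have hane : ((q * m : ℕ) : ZMod (m * n)) ≠ ((q * m + u : ℕ) : ZMod (m * n)) := by
        intro hcontra
        have := congrArg ZMod.val hcontra
        rw [hv0, hvm q u hq hum] at this
        omega
      have hbid : b = ((q * m : ℕ) : ZMod (m * n)) := by
        by_contra hbne2
        have hz1 : g (((q * m + (m - 1) : ℕ) : ZMod (m * n))) = ((q * m : ℕ) : ZMod (m * n)) := by
          rw [hg_eq, hgB q (m - 1) (by omega)]
          have hmod : (m - 1 + 1) % m = 0 := by
            rw [show m - 1 + 1 = m by omega, Nat.mod_self]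
          rw [hmod, Nat.add_zero]
          exact hfixes _ hblk0 hane (fun hh => hbne2 hh.symm)
        have hhalfz1 := hghalf _ _
          (⟨1, by simp⟩ : g.SameCycle (((q * m + (m - 1) : ℕ) : ZMod (m * n)))
            (g (((q * m + (m - 1) : ℕ) : ZMod (m * n)))))
        rw [hz1, hvm q (m - 1) hq (by omega), hv0] at hhalfz1
        rw [hhval q (m - 1) (by omega), if_neg (show ¬ m - 1 < u by omega)] at hhalfz1
        have h20 : q * m / u = 2 * q := by
          have := hhval q 0 (by omega)
          rw [if_pos hupos, Nat.add_zero] at this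
          exact this
        omega
      -- now the case bash on r
      have hstep : g (((q * m + r : ℕ) : ZMod (m * n))) =
          h (((q * m + (r + 1) % m : ℕ) : ZMod (m * n))) := by
        rw [hg_eq, hgB q r hr]
      by_cases hr1 : r = m - 1
      · -- wraps to the start of the block
        subst hr1
        have hmod : (m - 1 + 1) % m = 0 := by
          rw [show m - 1 + 1 = m by omega, Nat.mod_self]
        rw [hstep, hmod, Nat.add_zero, ← hbid, hba]
        have hnat : q * m + (m - 1) = (2 * q + 1) * u + (u - 1) := by
          have := hqmu q
          have h21 : (2 * q + 1) * u = 2 * q * u + u := by ring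
          omega
        rw [hnat, hX (2 * q + 1) (u - 1) (by omega)]
        have hmod2 : (u - 1 + 1) % u = 0 := by
          rw [show u - 1 + 1 = u by omega, Nat.mod_self]
        rw [hmod2, Nat.add_zero]
        apply congrArg
        have := hqmu q
        have h21 : (2 * q + 1) * u = 2 * q * u + u := by ring
        omega
      · have hrm : r + 1 < m := by omega
        have hmod : (r + 1) % m = r + 1 := Nat.mod_eq_of_lt hrm
        rw [hstep, hmod]
        by_cases hr2 : r + 1 = u
        · -- crosses into the second half : must jump back
          rw [show q * m + (r + 1) = q * m + u by omega, hab, hbid]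
          have hnat : q * m + r = 2 * q * u + r := by
            have := hqmu q
            omega
          rw [hnat, hX (2 * q) r (by omega)]
          rw [show (r + 1) % u = 0 by rw [show r + 1 = u from hr2, Nat.mod_self], Nat.add_zero]
          apply congrArg
          have := hqmu q
          omega
        · -- generic step
          have hblkr : (((q * m + (r + 1) : ℕ) : ZMod (m * n))).val / m = q := by
            rw [hvm q (r + 1) hq hrm, div_block_helper (by omega) hrm]
          have hne1 : ((q * m + (r + 1) : ℕ) : ZMod (m * n)) ≠ ((q * m + u : ℕ) : ZMod (m * n)) := by
            intro hcontra
            have := congrArg ZMod.val hcontra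
            rw [hvm q (r + 1) hq hrm, hvm q u hq hum] at this
            omega
          have hne2 : ((q * m + (r + 1) : ℕ) : ZMod (m * n)) ≠ b := by
            rw [hbid]
            intro hcontra
            have := congrArg ZMod.val hcontra
            rw [hvm q (r + 1) hq hrm, hv0] at this
            omega
          rw [hfixes _ hblkr hne1 hne2]
          by_cases hru : r < u
          · have hru1 : r + 1 < u := by omega
            have hnat : q * m + r = 2 * q * u + r := by
              have := hqmu q
              omega
            rw [hnat, hX (2 * q) r hru, Nat.mod_eq_of_lt hru1]
            apply congrArg
            have := hqmu q
            omega
          · have hru1 : r - u + 1 < u := by omega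
            have h21 : (2 * q + 1) * u = 2 * q * u + u := by ring
            have hnat : q * m + r = (2 * q + 1) * u + (r - u) := by
              have := hqmu q
              omega
            rw [hnat, hX (2 * q + 1) (r - u) (by omega), Nat.mod_eq_of_lt hru1]
            apply congrArg
            have := hqmu q
            omega
    apply Equiv.ext
    intro z
    obtain ⟨q, r, hq, hr, hz, -⟩ := zmod_repr m n (by omega) rfl z
    rw [hz]
    exact hfinal q r hq hr
  have hXcount : g = X → cycleCount g = 2 * n := fun h => by rw [h]; exact hcX
  constructor
  · constructor
    · rw [hcayg1]; omega
    · constructor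
      · intro h
        apply huniq
        rw [hcayg1] at h
        omega
      · intro h
        rw [hcayg1, hXcount h]
        omega
  · constructor
    · rw [hcayAg, hcayg1, hcayA1] at hgeoA
      rw [hcaygA]
      omega
    · constructor
      · intro h
        apply huniq
        rw [hcaygA] at h
        rw [hcayAg, hcayg1, hcayA1] at hgeoA
        omega
      · intro h
        have := hXcount h
        rw [hcaygA]
        rw [hcayAg, hcayg1, hcayA1] at hgeoA
        omega
end

section
/- Let n ≥ 1 and consider partitions of the set {0,1,…,2n−1}. Let t_B be the perfect-matching partition {{0,1},{2,3},…,{2n−2,2n−1}} and let t_A be the shifted matching {{1,2},{3,4},…,{2n−1,0}}. Then for every partition q of {0,1,…,2n−1}: #(q ∨ t_A) + #(q ∨ t_B) ≤ #(q) + 1; moreover, if q contains at least one singleton block, then #(q ∨ t_A) + #(q ∨ t_B) ≤ #(q). -/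
variable {α : Type*}

def pairS (a b : α) : Setoid α :=
  ⟨fun x y => x = y ∨ (x = a ∧ y = b) ∨ (x = b ∧ y = a), by
    refine ⟨fun x => Or.inl rfl, fun h => by tauto, ?_⟩
    intro x y z h1 h2
    rcases h1 with h1|⟨h1,h1'⟩|⟨h1,h1'⟩ <;> rcases h2 with h2|⟨h2,h2'⟩|⟨h2,h2'⟩ <;>
      simp_all <;> tauto⟩

lemma pairS_rel_left (a b : α) : (pairS a b) a b := Or.inr (Or.inl ⟨rfl, rfl⟩)

lemma pairS_le {s : Setoid α} {a b : α} (h : s a b) : pairS a b ≤ s := by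
  rw [Setoid.le_def]
  intro x y hxy
  rcases hxy with h1|⟨h1,h2⟩|⟨h1,h2⟩
  · rw [h1]
  · rw [h1, h2]; exact h
  · rw [h1, h2]; exact s.symm h

lemma rel_sup_pair (p : Setoid α) (a b : α) (x y : α) :
    (p ⊔ pairS a b) x y ↔ p x y ∨ (p x a ∧ p b y) ∨ (p x b ∧ p a y) := by
  set s : Setoid α := ⟨fun x y => p x y ∨ (p x a ∧ p b y) ∨ (p x b ∧ p a y), by
    constructor
    · intro x; left; exact p.refl x
    · intro x y h
      rcases h with h|⟨h1,h2⟩|⟨h1,h2⟩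
      · exact Or.inl (p.symm h)
      · exact Or.inr (Or.inr ⟨p.symm h2, p.symm h1⟩)
      · exact Or.inr (Or.inl ⟨p.symm h2, p.symm h1⟩)
    · intro x y z h1 h2
      rcases h1 with h1|⟨h1,h1'⟩|⟨h1,h1'⟩ <;> rcases h2 with h2|⟨h2,h2'⟩|⟨h2,h2'⟩
      · exact Or.inl (p.trans h1 h2)
      · exact Or.inr (Or.inl ⟨p.trans h1 h2, h2'⟩)
      · exact Or.inr (Or.inr ⟨p.trans h1 h2, h2'⟩)
      · exact Or.inr (Or.inl ⟨h1, p.trans h1' h2⟩)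
      · exact Or.inl (p.trans (p.trans h1 (p.symm h2)) (p.trans (p.symm h1') h2'))
      · exact Or.inl (p.trans h1 h2')
      · exact Or.inr (Or.inr ⟨h1, p.trans h1' h2⟩)
      · exact Or.inl (p.trans h1 h2')
      · exact Or.inl (p.trans (p.trans h1 (p.symm h2)) (p.trans (p.symm h1') h2'))⟩
    with hsdef
  have he : p ⊔ pairS a b = s := by
    apply le_antisymm
    · apply sup_le
      · rw [Setoid.le_def]; intro x y h; exact Or.inl h
      · exact pairS_le (Or.inr (Or.inl ⟨p.refl a, p.refl b⟩))
    · rw [Setoid.le_def]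
      intro x y h
      have hp : p ≤ p ⊔ pairS a b := le_sup_left
      have hq : pairS a b ≤ p ⊔ pairS a b := le_sup_right
      rcases h with h|⟨h1,h2⟩|⟨h1,h2⟩
      · exact hp h
      · exact (p ⊔ pairS a b).trans (hp h1)
          ((p ⊔ pairS a b).trans (hq (pairS_rel_left a b)) (hp h2))
      · exact (p ⊔ pairS a b).trans (hp h1)
          ((p ⊔ pairS a b).trans ((p ⊔ pairS a b).symm (hq (pairS_rel_left a b))) (hp h2))
  rw [he]; exact Iff.rfl

lemma sup_pair_absorb (p : Setoid α) {a b : α} (h : p a b) : p ⊔ pairS a b = p :=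
  sup_eq_left.mpr (pairS_le h)

section Card
variable [Finite α]

lemma card_mono {p p' : Setoid α} (h : p ≤ p') :
    Nat.card (Quotient p') ≤ Nat.card (Quotient p) := by
  have : Finite (Quotient p) := Quotient.finite p
  apply Nat.card_le_card_of_surjective (Quotient.map id (fun x y hxy => h hxy))
  intro z
  obtain ⟨x, rfl⟩ := Quotient.exists_rep z
  exact ⟨Quotient.mk p x, rfl⟩

lemma card_sup_pair (p : Setoid α) {a b : α} (h : ¬ p a b) :
    Nat.card (Quotient (p ⊔ pairS a b)) + 1 = Nat.card (Quotient p) := by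
  classical
  have : Fintype α := Fintype.ofFinite α
  set s := p ⊔ pairS a b with hs
  have hchar := rel_sup_pair p a b
  have hanb : (Quotient.mk p a : Quotient p) ≠ Quotient.mk p b := by
    intro hc; exact h (Quotient.eq.mp hc)
  have e : Quotient s ≃ {y : Quotient p // y ≠ Quotient.mk p b} := by
    refine
      { toFun := Quotient.lift
          (fun x => if hx : p x b then ⟨Quotient.mk p a, hanb⟩
            else ⟨Quotient.mk p x, fun hc => hx (Quotient.eq.mp hc)⟩) ?_
        invFun := fun y => Quotient.lift (fun x => Quotient.mk s x)
          (fun x y hxy => Quotient.sound ((le_sup_left : p ≤ s) hxy)) y.1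
        left_inv := ?_
        right_inv := ?_ }
    · intro x y hxy
      beta_reduce
      rcases (hchar x y).mp hxy with h1|⟨h1,h2⟩|⟨h1,h2⟩
      · by_cases hxb : p x b
        · rw [dif_pos hxb, dif_pos (show p y b from p.trans (p.symm h1) hxb)]
        · rw [dif_neg hxb, dif_neg (show ¬ p y b from fun hyb => hxb (p.trans h1 hyb))]
          exact Subtype.ext (Quotient.sound h1)
      · have hxb : ¬ p x b := fun hxb => h (p.trans (p.symm h1) hxb)
        have hyb : p y b := p.symm h2
        rw [dif_neg hxb, dif_pos hyb]
        exact Subtype.ext (Quotient.sound h1)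
      · have hyb : ¬ p y b := fun hyb => h (p.trans h2 hyb)
        rw [dif_pos h1, dif_neg hyb]
        exact Subtype.ext (Quotient.sound h2)
    · intro z
      obtain ⟨x, rfl⟩ := Quotient.exists_rep z
      by_cases hxb : p x b
      · simp only [Quotient.lift_mk, dif_pos hxb]
        exact Quotient.sound ((hchar a x).mpr (Or.inr (Or.inl ⟨p.refl a, p.symm hxb⟩)))
      · simp only [Quotient.lift_mk, dif_neg hxb]
    · intro y
      obtain ⟨x, hx⟩ := Quotient.exists_rep y.1
      have hxb : ¬ p x b := by
        intro hc
        exact y.2 (hx ▸ Quotient.sound hc)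
      apply Subtype.ext
      simp only [← hx, Quotient.lift_mk, dif_neg hxb]
  have : Fintype (Quotient p) := Fintype.ofFinite _
  have h1 : Nat.card (Quotient s) = Nat.card {y : Quotient p // y ≠ Quotient.mk p b} :=
    Nat.card_congr e
  have h2 : Fintype.card {y : Quotient p // ¬ (y = Quotient.mk p b)} =
      Fintype.card (Quotient p) - Fintype.card {y : Quotient p // y = Quotient.mk p b} :=
    Fintype.card_subtype_compl _
  rw [Fintype.card_subtype_eq] at h2
  have h3 : 1 ≤ Fintype.card (Quotient p) :=
    Fintype.card_pos_iff.mpr ⟨Quotient.mk p b⟩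
  rw [h1]
  simp only [ne_eq, Nat.card_eq_fintype_card]
  omega

lemma card_sup_pair_le (p : Setoid α) (a b : α) :
    Nat.card (Quotient p) ≤ Nat.card (Quotient (p ⊔ pairS a b)) + 1 := by
  by_cases h : p a b
  · rw [sup_pair_absorb p h]; omega
  · rw [card_sup_pair p h]

end Card

def joinL : List (α × α) → Setoid α
  | [] => ⊥
  | e :: T => pairS e.1 e.2 ⊔ joinL T

@[simp] lemma joinL_nil : joinL ([] : List (α × α)) = ⊥ := rfl
@[simp] lemma joinL_cons (e : α × α) (T : List (α × α)) :
    joinL (e :: T) = pairS e.1 e.2 ⊔ joinL T := rfl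

lemma pair_le_joinL {L : List (α × α)} {e : α × α} (he : e ∈ L) :
    pairS e.1 e.2 ≤ joinL L := by
  induction L with
  | nil => simp at he
  | cons f T ih =>
    rcases List.mem_cons.mp he with rfl | he'
    · exact le_sup_left
    · exact le_trans (ih he') le_sup_right

lemma joinL_le {L : List (α × α)} {s : Setoid α} (h : ∀ e ∈ L, s e.1 e.2) :
    joinL L ≤ s := by
  induction L with
  | nil => simp
  | cons f T ih =>
    exact sup_le (pairS_le (h f List.mem_cons_self))
      (ih fun e he => h e (List.mem_cons_of_mem f he))

section Card
variable [Finite α]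

lemma dimret_pair {p p' : Setoid α} (h : p ≤ p') (a b : α) :
    Nat.card (Quotient p') + Nat.card (Quotient (p ⊔ pairS a b)) ≤
      Nat.card (Quotient p) + Nat.card (Quotient (p' ⊔ pairS a b)) := by
  by_cases hp : p a b
  · rw [sup_pair_absorb p hp, sup_pair_absorb p' (h hp)]; omega
  · by_cases hp' : p' a b
    · rw [sup_pair_absorb p' hp']
      have := card_sup_pair p hp
      omega
    · have h1 := card_sup_pair p hp
      have h2 := card_sup_pair p' hp'
      omega

lemma dimret {p p' : Setoid α} (h : p ≤ p') (L : List (α × α)) :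
    Nat.card (Quotient p') + Nat.card (Quotient (p ⊔ joinL L)) ≤
      Nat.card (Quotient p) + Nat.card (Quotient (p' ⊔ joinL L)) := by
  induction L generalizing p p' with
  | nil => simp only [joinL_nil, sup_bot_eq]; omega
  | cons e T ih =>
    have key := dimret_pair h e.1 e.2
    have ih' := ih (p := p ⊔ pairS e.1 e.2) (p' := p' ⊔ pairS e.1 e.2)
      (sup_le_sup_right h _)
    simp only [joinL_cons, ← sup_assoc] at *
    omega

lemma card_top [Nonempty α] : Nat.card (Quotient (⊤ : Setoid α)) = 1 := by
  obtain ⟨x⟩ := ‹Nonempty α›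
  have : Subsingleton (Quotient (⊤ : Setoid α)) := by
    constructor
    intro z w
    obtain ⟨u, rfl⟩ := Quotient.exists_rep z
    obtain ⟨v, rfl⟩ := Quotient.exists_rep w
    exact Quotient.sound trivial
  have : Unique (Quotient (⊤ : Setoid α)) :=
    ⟨⟨Quotient.mk _ x⟩, fun z => Subsingleton.elim _ _⟩
  exact Nat.card_unique

end Card

lemma singleton_joinL {p : Setoid α} {i : α} (hi : ∀ j, p j i → j = i)
    (L : List (α × α)) (hL : ∀ e ∈ L, e.1 ≠ i ∧ e.2 ≠ i) :
    ∀ j, (p ⊔ joinL L) j i → j = i := by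
  set s' : Setoid α := ⟨fun x y => (p ⊔ joinL L) x y ∧ (x = i ↔ y = i), by
    constructor
    · intro x; exact ⟨(p ⊔ joinL L).refl x, Iff.rfl⟩
    · intro x y h; exact ⟨(p ⊔ joinL L).symm h.1, h.2.symm⟩
    · intro x y z h1 h2; exact ⟨(p ⊔ joinL L).trans h1.1 h2.1, h1.2.trans h2.2⟩⟩
  have hle : p ⊔ joinL L ≤ s' := by
    apply sup_le
    · rw [Setoid.le_def]
      intro x y hxy
      refine ⟨(le_sup_left : p ≤ p ⊔ joinL L) hxy, ?_, ?_⟩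
      · intro hx; subst hx; exact hi y (p.symm hxy)
      · intro hy; subst hy; exact hi x hxy
    · apply joinL_le
      intro e he
      refine ⟨(le_sup_right : joinL L ≤ p ⊔ joinL L) (pair_le_joinL he (pairS_rel_left e.1 e.2)), ?_⟩
      constructor
      · intro h1; exact absurd h1 (hL e he).1
      · intro h2; exact absurd h2 (hL e he).2
  intro j hj
  exact ((Setoid.le_def.mp hle) hj).2.mpr rfl

lemma path_conn {N : ℕ} (s : Setoid (Fin N)) (aa : ℕ) :
    ∀ bb (h1 : aa ≤ bb) (h2 : bb < N),
      (∀ m (hm1 : aa ≤ m) (hm2 : m < bb),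
        s ⟨m, by omega⟩ ⟨m + 1, by omega⟩) →
      s ⟨aa, by omega⟩ ⟨bb, h2⟩ := by
  intro bb
  induction bb with
  | zero =>
    intro h _ _
    have : aa = 0 := Nat.le_zero.mp h
    subst this
    exact s.refl _
  | succ k IH =>
    intro h h2 hstep
    rcases Nat.lt_or_ge k (aa) with hk | hk
    · have : aa = k + 1 := by omega
      subst this
      exact s.refl _
    · exact s.trans (IH hk (by omega) (fun m hm1 hm2 => hstep m hm1 (by omega)))
        (hstep k hk (by omega))
/-- For the matching partitions `t_B = {{0,1},{2,3},...}` and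
`t_A = {{1,2},{3,4},...,{2n-1,0}}` of `{0,...,2n-1}` and any partition `q`:
`#(q ∨ t_A) + #(q ∨ t_B) ≤ #(q) + 1`, and `≤ #(q)` if `q` has a singleton block. -/
theorem stmt17 (n : ℕ) (hn : 1 ≤ n) (tA tB : Setoid (Fin (2 * n)))
    (htB : ∀ i j : Fin (2 * n), tB.r i j ↔ i.val / 2 = j.val / 2)
    (htA : ∀ i j : Fin (2 * n), tA.r i j ↔
      (i.val + 1) % (2 * n) / 2 = (j.val + 1) % (2 * n) / 2)
    (q : Setoid (Fin (2 * n))) :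
    Nat.card (Quotient (q ⊔ tA)) + Nat.card (Quotient (q ⊔ tB)) ≤
      Nat.card (Quotient q) + 1 ∧
    ((∃ i : Fin (2 * n), ∀ j : Fin (2 * n), q.r i j → j = i) →
      Nat.card (Quotient (q ⊔ tA)) + Nat.card (Quotient (q ⊔ tB)) ≤
        Nat.card (Quotient q)) := by
  have hN : 0 < 2 * n := by omega
  have hne : Nonempty (Fin (2 * n)) := ⟨⟨0, hN⟩⟩
  set LA : List (Fin (2 * n) × Fin (2 * n)) :=
    (List.finRange n).map (fun k =>
      (⟨2 * k.1 + 1, by have := k.isLt; omega⟩,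
       ⟨(2 * k.1 + 2) % (2 * n), Nat.mod_lt _ hN⟩)) with hLA
  set LB : List (Fin (2 * n) × Fin (2 * n)) :=
    (List.finRange n).map (fun k =>
      (⟨2 * k.1, by have := k.isLt; omega⟩,
       ⟨2 * k.1 + 1, by have := k.isLt; omega⟩)) with hLB
  -- membership relation helpers
  have relA : ∀ (u v : Fin (2 * n)) (k : ℕ), k < n → u.1 = 2 * k + 1 →
      v.1 = (2 * k + 2) % (2 * n) → joinL LA u v := by
    intro u v k hk hu hv
    have hmem : ((⟨2 * k + 1, by omega⟩, ⟨(2 * k + 2) % (2 * n), Nat.mod_lt _ hN⟩) :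
        Fin (2 * n) × Fin (2 * n)) ∈ LA := by
      rw [hLA]
      exact List.mem_map.mpr ⟨⟨k, hk⟩, List.mem_finRange _, rfl⟩
    have hm : joinL LA ⟨2 * k + 1, by omega⟩ ⟨(2 * k + 2) % (2 * n), Nat.mod_lt _ hN⟩ :=
      pair_le_joinL hmem (pairS_rel_left _ _)
    have hu' : u = ⟨2 * k + 1, by omega⟩ := Fin.ext hu
    have hv' : v = ⟨(2 * k + 2) % (2 * n), Nat.mod_lt _ hN⟩ := Fin.ext hv
    rw [hu', hv']
    exact hm
  have relB : ∀ (u v : Fin (2 * n)) (k : ℕ), k < n → u.1 = 2 * k →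
      v.1 = 2 * k + 1 → joinL LB u v := by
    intro u v k hk hu hv
    have hmem : ((⟨2 * k, by omega⟩, ⟨2 * k + 1, by omega⟩) :
        Fin (2 * n) × Fin (2 * n)) ∈ LB := by
      rw [hLB]
      exact List.mem_map.mpr ⟨⟨k, hk⟩, List.mem_finRange _, rfl⟩
    have hm : joinL LB ⟨2 * k, by omega⟩ ⟨2 * k + 1, by omega⟩ :=
      pair_le_joinL hmem (pairS_rel_left _ _)
    have hu' : u = ⟨2 * k, by omega⟩ := Fin.ext hu
    have hv' : v = ⟨2 * k + 1, by omega⟩ := Fin.ext hv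
    rw [hu', hv']
    exact hm
  -- tB = joinL LB
  have htBj : tB = joinL LB := by
    apply le_antisymm
    · rw [Setoid.le_def]
      intro x y hxy
      have hxy' : x.1 / 2 = y.1 / 2 := (htB x y).mp hxy
      have hxlt := x.isLt
      have hylt := y.isLt
      by_cases hv : x.1 = y.1
      · rw [Fin.ext hv]
      · rcases (by omega : x.1 = 2 * (x.1 / 2) ∧ y.1 = 2 * (x.1 / 2) + 1 ∨
            x.1 = 2 * (x.1 / 2) + 1 ∧ y.1 = 2 * (x.1 / 2)) with ⟨h1, h2⟩ | ⟨h1, h2⟩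
        · exact relB x y (x.1 / 2) (by omega) h1 h2
        · exact (joinL LB).symm (relB y x (x.1 / 2) (by omega) h2 h1)
    · apply joinL_le
      intro e he
      rw [hLB] at he
      obtain ⟨k, -, rfl⟩ := List.mem_map.mp he
      exact (htB _ _).mpr (show (2 * k.1) / 2 = (2 * k.1 + 1) / 2 by omega)
  -- tA = joinL LA
  have htAj : tA = joinL LA := by
    apply le_antisymm
    · rw [Setoid.le_def]
      intro x y hxy
      have hxy' : (x.1 + 1) % (2 * n) / 2 = (y.1 + 1) % (2 * n) / 2 := (htA x y).mp hxy
      have hxlt := x.isLt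
      have hylt := y.isLt
      have hxmod : x.1 + 1 < 2 * n ∧ (x.1 + 1) % (2 * n) = x.1 + 1 ∨
          x.1 = 2 * n - 1 ∧ (x.1 + 1) % (2 * n) = 0 := by
        rcases Nat.lt_or_ge (x.1 + 1) (2 * n) with hlt | hge
        · exact Or.inl ⟨hlt, Nat.mod_eq_of_lt hlt⟩
        · refine Or.inr ⟨by omega, ?_⟩
          rw [show x.1 + 1 = 2 * n by omega, Nat.mod_self]
      have hymod : y.1 + 1 < 2 * n ∧ (y.1 + 1) % (2 * n) = y.1 + 1 ∨
          y.1 = 2 * n - 1 ∧ (y.1 + 1) % (2 * n) = 0 := by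
        rcases Nat.lt_or_ge (y.1 + 1) (2 * n) with hlt | hge
        · exact Or.inl ⟨hlt, Nat.mod_eq_of_lt hlt⟩
        · refine Or.inr ⟨by omega, ?_⟩
          rw [show y.1 + 1 = 2 * n by omega, Nat.mod_self]
      by_cases hv : x.1 = y.1
      · rw [Fin.ext hv]
      · have hwrap : (2 * (n - 1) + 2) % (2 * n) = 0 := by
          rw [show 2 * (n - 1) + 2 = 2 * n by omega, Nat.mod_self]
        by_cases hM : (x.1 + 1) % (2 * n) / 2 = 0
        · -- x, y ∈ {0, 2n-1}
          have hx0 : x.1 = 0 ∨ x.1 = 2 * n - 1 := by omega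
          have hy0 : y.1 = 0 ∨ y.1 = 2 * n - 1 := by omega
          rcases hx0 with hx0 | hx0 <;> rcases hy0 with hy0 | hy0
          · omega
          · exact (joinL LA).symm (relA y x (n - 1) (by omega) (by omega) (by omega))
          · exact relA x y (n - 1) (by omega) (by omega) (by omega)
          · omega
        · -- no wraparound
          set m := (x.1 + 1) % (2 * n) / 2 with hm
          have hxnw : (x.1 + 1) % (2 * n) = x.1 + 1 := by omega
          have hynw : (y.1 + 1) % (2 * n) = y.1 + 1 := by omega
          have hmlt : m < n := by omega
          have hmod2 : (2 * (m - 1) + 2) % (2 * n) = 2 * m := by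
            rw [show 2 * (m - 1) + 2 = 2 * m by omega]
            exact Nat.mod_eq_of_lt (by omega)
          have hx1 : x.1 = 2 * m - 1 ∨ x.1 = 2 * m := by omega
          have hy1 : y.1 = 2 * m - 1 ∨ y.1 = 2 * m := by omega
          rcases hx1 with hx1 | hx1 <;> rcases hy1 with hy1 | hy1
          · omega
          · exact relA x y (m - 1) (by omega) (by omega) (by omega)
          · exact (joinL LA).symm (relA y x (m - 1) (by omega) (by omega) (by omega))
          · omega
    · apply joinL_le
      intro e he
      rw [hLA] at he
      obtain ⟨k, -, rfl⟩ := List.mem_map.mp he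
      refine (htA _ _).mpr ?_
      show (2 * k.1 + 1 + 1) % (2 * n) / 2 = ((2 * k.1 + 2) % (2 * n) + 1) % (2 * n) / 2
      have hk := k.isLt
      rcases Nat.lt_or_ge k.1 (n - 1) with hk1 | hk1
      · rw [Nat.mod_eq_of_lt (show 2 * k.1 + 1 + 1 < 2 * n by omega),
          Nat.mod_eq_of_lt (show 2 * k.1 + 2 + 1 < 2 * n by omega)]
        omega
      · have hk2 : k.1 = n - 1 := by omega
        rw [show 2 * k.1 + 1 + 1 = 2 * n by omega, Nat.mod_self,
          Nat.mod_eq_of_lt (show 0 + 1 < 2 * n by omega)]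
  -- connectivity: tA ⊔ tB = ⊤
  have stepAB : ∀ m (hm : m + 1 < 2 * n), (tA ⊔ tB) ⟨m, by omega⟩ ⟨m + 1, by omega⟩ := by
    intro m hm
    by_cases hpar : m % 2 = 0
    · exact (le_sup_right : tB ≤ tA ⊔ tB) ((htB _ _).mpr (show m / 2 = (m + 1) / 2 by omega))
    · refine (le_sup_left : tA ≤ tA ⊔ tB) ?_
      refine (htA _ _).mpr ?_
      show (m + 1) % (2 * n) / 2 = (m + 1 + 1) % (2 * n) / 2
      rw [Nat.mod_eq_of_lt (show m + 1 < 2 * n by omega),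
        Nat.mod_eq_of_lt (show m + 1 + 1 < 2 * n by omega)]
      omega
  have conn1 : tA ⊔ tB = ⊤ := by
    apply le_antisymm le_top
    rw [Setoid.le_def]
    intro x y _
    have hub : ∀ z : Fin (2 * n), (tA ⊔ tB) ⟨0, hN⟩ z := by
      intro z
      have hz := z.isLt
      have hp := path_conn (tA ⊔ tB) 0 z.1 (Nat.zero_le _) hz
        (fun m hm1 hm2 => stepAB m (by omega))
      exact Fin.eta z hz ▸ hp
    exact (tA ⊔ tB).trans ((tA ⊔ tB).symm (hub x)) (hub y)
  have key1 := dimret (le_sup_left : q ≤ q ⊔ tA) LB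
  rw [← htBj, sup_assoc, conn1, sup_top_eq, card_top] at key1
  refine ⟨key1, ?_⟩
  rintro ⟨i, hi⟩
  have hilt := i.isLt
  obtain ⟨b, hbspec⟩ : ∃ b : Fin (2 * n),
      (i.1 = 2 * (i.1 / 2) ∧ b.1 = 2 * (i.1 / 2) + 1) ∨
      (i.1 = 2 * (i.1 / 2) + 1 ∧ b.1 = 2 * (i.1 / 2)) := by
    rcases (by omega : i.1 = 2 * (i.1 / 2) ∨ i.1 = 2 * (i.1 / 2) + 1) with h | h
    · exact ⟨⟨2 * (i.1 / 2) + 1, by omega⟩, Or.inl ⟨h, rfl⟩⟩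
    · exact ⟨⟨2 * (i.1 / 2), by omega⟩, Or.inr ⟨h, rfl⟩⟩
  have hbne : b ≠ i := by
    intro h
    have hbv : b.1 = i.1 := congrArg Fin.val h
    omega
  set LB' : List (Fin (2 * n) × Fin (2 * n)) :=
    ((List.finRange n).filter (fun k => k.1 ≠ i.1 / 2)).map (fun k =>
      (⟨2 * k.1, by have := k.isLt; omega⟩, ⟨2 * k.1 + 1, by have := k.isLt; omega⟩)) with hLB'
  have relB' : ∀ (u v : Fin (2 * n)) (k : ℕ), k < n → k ≠ i.1 / 2 → u.1 = 2 * k →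
      v.1 = 2 * k + 1 → joinL LB' u v := by
    intro u v k hk hkne hu hv
    have hmem : ((⟨2 * k, by omega⟩, ⟨2 * k + 1, by omega⟩) : Fin (2 * n) × Fin (2 * n)) ∈ LB' := by
      rw [hLB']
      refine List.mem_map.mpr ⟨⟨k, hk⟩, ?_, rfl⟩
      exact List.mem_filter.mpr ⟨List.mem_finRange _, by simpa using hkne⟩
    have hm := pair_le_joinL hmem (pairS_rel_left _ _)
    have hu' : u = ⟨2 * k, by omega⟩ := Fin.ext hu
    have hv' : v = ⟨2 * k + 1, by omega⟩ := Fin.ext hv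
    rw [hu', hv']; exact hm
  have hLB'le : joinL LB' ≤ tB := by
    apply joinL_le
    intro e he
    rw [hLB'] at he
    obtain ⟨k, -, rfl⟩ := List.mem_map.mp he
    exact (htB _ _).mpr (show (2 * k.1) / 2 = (2 * k.1 + 1) / 2 by omega)
  have hLB'avoid : ∀ e ∈ LB', e.1 ≠ i ∧ e.2 ≠ i := by
    intro e he
    rw [hLB'] at he
    obtain ⟨k, hk, rfl⟩ := List.mem_map.mp he
    have hk' : k.1 ≠ i.1 / 2 := by simpa using (List.mem_filter.mp hk).2
    constructor
    · intro h
      have hv : 2 * k.1 = i.1 := congrArg Fin.val h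
      omega
    · intro h
      have hv : 2 * k.1 + 1 = i.1 := congrArg Fin.val h
      omega
  have htB' : tB = pairS i b ⊔ joinL LB' := by
    apply le_antisymm
    · rw [Setoid.le_def]
      intro x y hxy
      have hxy' : x.1 / 2 = y.1 / 2 := (htB x y).mp hxy
      have hxlt := x.isLt; have hylt := y.isLt
      by_cases hv : x.1 = y.1
      · rw [Fin.ext hv]
      · by_cases hk : x.1 / 2 = i.1 / 2
        · refine (le_sup_left : pairS i b ≤ pairS i b ⊔ joinL LB') ?_
          by_cases hxi : x.1 = i.1
          · exact Or.inr (Or.inl ⟨Fin.ext hxi, Fin.ext (by omega)⟩)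
          · exact Or.inr (Or.inr ⟨Fin.ext (by omega), Fin.ext (by omega)⟩)
        · refine (le_sup_right : joinL LB' ≤ pairS i b ⊔ joinL LB') ?_
          rcases (by omega : x.1 = 2 * (x.1 / 2) ∧ y.1 = 2 * (x.1 / 2) + 1 ∨
              x.1 = 2 * (x.1 / 2) + 1 ∧ y.1 = 2 * (x.1 / 2)) with ⟨h1, h2⟩ | ⟨h1, h2⟩
          · exact relB' x y (x.1 / 2) (by omega) hk h1 h2
          · exact (joinL LB').symm (relB' y x (x.1 / 2) (by omega) hk h2 h1)
    · exact sup_le (pairS_le ((htB i b).mpr (by omega))) hLB'le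
  have step2 : ∀ m (hm : m + 1 < 2 * n) (hcond : m % 2 = 1 ∨ m / 2 ≠ i.1 / 2),
      (tA ⊔ joinL LB') ⟨m, by omega⟩ ⟨m + 1, by omega⟩ := by
    intro m hm hcond
    by_cases hpar : m % 2 = 0
    · refine (le_sup_right : joinL LB' ≤ tA ⊔ joinL LB') ?_
      exact relB' _ _ (m / 2) (by omega) (by omega)
        (show m = 2 * (m / 2) by omega) (show m + 1 = 2 * (m / 2) + 1 by omega)
    · refine (le_sup_left : tA ≤ tA ⊔ joinL LB') ?_
      refine (htA _ _).mpr ?_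
      show (m + 1) % (2 * n) / 2 = (m + 1 + 1) % (2 * n) / 2
      rw [Nat.mod_eq_of_lt (show m + 1 < 2 * n by omega),
        Nat.mod_eq_of_lt (show m + 1 + 1 < 2 * n by omega)]
      omega
  have connUp : ∀ z : Fin (2 * n), 2 * (i.1 / 2) + 1 ≤ z.1 →
      (tA ⊔ joinL LB') ⟨2 * (i.1 / 2) + 1, by omega⟩ z := by
    intro z hz
    have hzlt := z.isLt
    have hp := path_conn (tA ⊔ joinL LB') (2 * (i.1 / 2) + 1) z.1 hz hzlt
      (fun m hm1 hm2 => step2 m (by omega) (by omega))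
    exact Fin.eta z hzlt ▸ hp
  have connLow : ∀ z : Fin (2 * n), z.1 ≤ 2 * (i.1 / 2) →
      (tA ⊔ joinL LB') ⟨0, hN⟩ z := by
    intro z hz
    have hzlt := z.isLt
    have hp := path_conn (tA ⊔ joinL LB') 0 z.1 (Nat.zero_le _) hzlt
      (fun m hm1 hm2 => step2 m (by omega) (by omega))
    exact Fin.eta z hzlt ▸ hp
  have hlink : (tA ⊔ joinL LB') ⟨2 * n - 1, by omega⟩ ⟨0, hN⟩ := by
    refine (le_sup_left : tA ≤ tA ⊔ joinL LB') ?_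
    refine (htA _ _).mpr ?_
    show (2 * n - 1 + 1) % (2 * n) / 2 = (0 + 1) % (2 * n) / 2
    rw [show 2 * n - 1 + 1 = 2 * n by omega, Nat.mod_self,
      Nat.mod_eq_of_lt (show 0 + 1 < 2 * n by omega)]
  have conn2 : tA ⊔ joinL LB' = ⊤ := by
    apply le_antisymm le_top
    rw [Setoid.le_def]
    intro x y _
    have hub : ∀ z : Fin (2 * n), (tA ⊔ joinL LB') ⟨2 * (i.1 / 2) + 1, by omega⟩ z := by
      intro z
      rcases Nat.lt_or_ge z.1 (2 * (i.1 / 2) + 1) with hz | hz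
      · exact (tA ⊔ joinL LB').trans
          ((tA ⊔ joinL LB').trans (connUp ⟨2 * n - 1, by omega⟩ (show 2 * (i.1 / 2) + 1 ≤ 2 * n - 1 by omega)) hlink)
          (connLow z (by omega))
      · exact connUp z hz
    exact (tA ⊔ joinL LB').trans ((tA ⊔ joinL LB').symm (hub x)) (hub y)
  have key2 := dimret (le_sup_left : q ≤ q ⊔ tA) LB'
  rw [sup_assoc, conn2, sup_top_eq, card_top] at key2
  have hsing : ∀ j, (q ⊔ joinL LB') j i → j = i :=
    singleton_joinL (fun j hj => hi j (q.symm hj)) LB' hLB'avoid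
  have hnotrel : ¬ (q ⊔ joinL LB') i b :=
    fun hc => hbne (hsing b ((q ⊔ joinL LB').symm hc))
  have hcount := card_sup_pair (q ⊔ joinL LB') hnotrel
  have heq : q ⊔ tB = q ⊔ joinL LB' ⊔ pairS i b := by
    rw [htB', sup_comm (pairS i b) (joinL LB'), ← sup_assoc]
  rw [heq]
  omega
end

section
/- Fix integers n ≥ 1 and even m ≥ 2, set N = m·n, and let g_A and X be the permutations of ℤ/Nℤ defined in the context. Then for every permutation g of ℤ/Nℤ, the 'pinching' inequality G_X(g) ≤ G_{g_A}(g) holds, where for any g₀ one defines 2·G_{g₀}(g) = d(g₀,g) + d(g,e) − d(g₀,e) − 2(#(g₀) − #⟨g,g₀⟩). Explicitly: d(g,g_A) − d(g,X) + n + 2·#⟨g,g_A⟩ − 2·#⟨g,X⟩ ≥ 0. -/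
/-- The number of orbits of the subgroup generated by two permutations `g, h`. -/
noncomputable def jointOrbitCount {α : Type*} (g h : Equiv.Perm α) : ℕ :=
  Nat.card (MulAction.orbitRel.Quotient (Subgroup.closure ({g, h} : Set (Equiv.Perm α))) α)

open Equiv Equiv.Perm Function

namespace Pinch

variable {α : Type*}

lemma card_quot_le {r s : Setoid α} [Finite α] (h : ∀ x y, r.r x y → s.r x y) :
    Nat.card (Quotient s) ≤ Nat.card (Quotient r) :=
  Nat.card_le_card_of_surjective (Quotient.map' id h)
    (fun q => Quotient.inductionOn' q (fun x => ⟨Quotient.mk'' x, rfl⟩))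

lemma subtype_ne_card (v : α) [Finite α] :
    Nat.card α = Nat.card {z : α // z ≠ v} + 1 := by
  classical
  have := Fintype.ofFinite α
  rw [Nat.card_eq_fintype_card, Nat.card_eq_fintype_card]
  have h1 : Fintype.card {z : α // ¬ z = v} = Fintype.card α - Fintype.card {z : α // z = v} :=
    Fintype.card_subtype_compl _
  have h2 : Fintype.card {z : α // z = v} = 1 := Fintype.card_subtype_eq v
  have h3 : 1 ≤ Fintype.card α := Fintype.card_pos_iff.mpr ⟨v⟩
  rw [h2] at h1
  have h1' : Fintype.card {z : α // z ≠ v} = Fintype.card α - 1 := h1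
  omega

lemma card_add_one_le {A B : Type*} [Finite A] (f : A → B) (hs : Surjective f)
    (x y : A) (hxy : x ≠ y) (hf : f x = f y) : Nat.card B + 1 ≤ Nat.card A := by
  have hsurj : Surjective (fun z : {z : A // z ≠ y} => f z) := by
    intro b
    obtain ⟨a, rfl⟩ := hs b
    by_cases h : a = y
    · exact ⟨⟨x, hxy⟩, by simp [hf, h]⟩
    · exact ⟨⟨a, h⟩, rfl⟩
  have h1 : Nat.card B ≤ Nat.card {z : A // z ≠ y} :=
    Nat.card_le_card_of_surjective _ hsurj
  rw [subtype_ne_card y]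
  omega

lemma card_le_add_one {A B : Type*} [Finite A] (f : A → B) (hs : Surjective f)
    (u v : A)
    (hf : ∀ x y, f x = f y → x = y ∨ (x = u ∧ y = v) ∨ (x = v ∧ y = u)) :
    Nat.card A ≤ Nat.card B + 1 := by
  have : Finite B := Finite.of_surjective f hs
  have hinj : Injective (fun z : {z : A // z ≠ v} => f z) := by
    rintro ⟨x, hx⟩ ⟨y, hy⟩ h
    rcases hf x y h with h | ⟨rfl, rfl⟩ | ⟨rfl, rfl⟩
    · exact Subtype.ext h
    · exact absurd rfl hy
    · exact absurd rfl hx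
  have h1 : Nat.card {z : A // z ≠ v} ≤ Nat.card B :=
    Nat.card_le_card_of_injective _ hinj
  rw [subtype_ne_card v]
  omega


variable {α : Type*}

/-- iterate stays in invariant set -/
lemma sameCycle_mem {π : Equiv.Perm α} [Finite α] {S : Set α}
    (hS : ∀ x ∈ S, π x ∈ S) {x y : α} (hx : x ∈ S) (h : π.SameCycle x y) : y ∈ S := by
  obtain ⟨i, _, rfl⟩ := h.exists_pow_eq'
  clear * - hS hx
  induction i with
  | zero => simpa using hx
  | succ n ih =>
      rw [pow_succ', Equiv.Perm.mul_apply]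
      exact hS _ ih

/-- F1: splitting a cycle refines cycles -/
lemma sc_mul_swap_of_sameCycle [Finite α] [DecidableEq α] {π : Equiv.Perm α} {u v : α}
    (huv : π.SameCycle u v) {x y : α} (h : (π * Equiv.swap u v).SameCycle x y) :
    π.SameCycle x y := by
  refine sameCycle_mem (S := {z | π.SameCycle x z}) ?_ (Equiv.Perm.SameCycle.refl π x) h
  intro z hz
  simp only [Set.mem_setOf_eq] at hz ⊢
  rw [Equiv.Perm.mul_apply]
  by_cases hzu : z = u
  · subst hzu
    rw [Equiv.swap_apply_left]
    exact (sameCycle_apply_right).2 (hz.trans huv)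
  · by_cases hzv : z = v
    · subst hzv
      rw [Equiv.swap_apply_right]
      exact (sameCycle_apply_right).2 (hz.trans huv.symm)
    · rw [Equiv.swap_apply_of_ne_of_ne hzu hzv]
      exact (sameCycle_apply_right).2 hz

/-- F2a: merging two cycles: u and v become same-cycle -/
lemma sameCycle_mul_swap_of_not [Finite α] [DecidableEq α] {π : Equiv.Perm α} {u v : α}
    (huv : ¬ π.SameCycle u v) : (π * Equiv.swap u v).SameCycle u v := by
  have hstep : ∀ k : ℕ, (∀ j, 0 < j → j ≤ k → (π ^ j) v ≠ v) →
      ((π * Equiv.swap u v) ^ (k + 1)) u = (π ^ (k + 1)) v := by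
    intro k
    induction k with
    | zero =>
        intro _
        simp [pow_succ, Equiv.Perm.mul_apply]
    | succ k ih =>
        intro hj
        have h1 : ((π * Equiv.swap u v) ^ (k + 1)) u = (π ^ (k + 1)) v :=
          ih (fun j hj1 hj2 => hj j hj1 (hj2.trans (Nat.le_succ k)))
        have hz : (π ^ (k + 1)) v ≠ u := by
          intro he
          exact huv (Equiv.Perm.SameCycle.symm
            ⟨((k + 1 : ℕ) : ℤ), by rw [zpow_natCast]; exact he⟩)
        have hzv : (π ^ (k + 1)) v ≠ v := hj (k + 1) (Nat.succ_pos k) (le_refl _)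
        rw [pow_succ', Equiv.Perm.mul_apply, h1, pow_succ' π (k + 1), Equiv.Perm.mul_apply,
          Equiv.Perm.mul_apply, Equiv.swap_apply_of_ne_of_ne hz hzv]
  have hex : ∃ j, 0 < j ∧ (π ^ j) v = v := ⟨orderOf π, orderOf_pos π, by simp [pow_orderOf_eq_one]⟩
  classical
  have hspec := Nat.find_spec hex
  obtain ⟨k, hk⟩ : ∃ k, Nat.find hex = k + 1 := ⟨Nat.find hex - 1, by omega⟩
  have : ((π * Equiv.swap u v) ^ (k + 1)) u = v := by
    rw [hstep k ?_]
    · rw [← hk]; exact hspec.2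
    · intro j hj1 hj2 he
      exact Nat.find_min hex (m := j) (by omega) ⟨hj1, he⟩
  exact ⟨((k + 1 : ℕ) : ℤ), by rw [zpow_natCast]; exact this⟩

/-- F2b -/
lemma sc_le_sc_mul_swap_of_not [Finite α] [DecidableEq α] {π : Equiv.Perm α} {u v : α}
    (huv : ¬ π.SameCycle u v) {x y : α} (h : π.SameCycle x y) :
    (π * Equiv.swap u v).SameCycle x y := by
  set π' := π * Equiv.swap u v with hπ'
  have huv' : π'.SameCycle u v := sameCycle_mul_swap_of_not huv
  have hπ : π = π' * Equiv.swap u v := by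
    rw [hπ', mul_assoc]
    simp [Equiv.swap_mul_self]
  refine sameCycle_mem (π := π) (S := {z | π'.SameCycle x z}) ?_
    (Equiv.Perm.SameCycle.refl π' x) h
  intro z hz
  simp only [Set.mem_setOf_eq] at hz ⊢
  rw [hπ, Equiv.Perm.mul_apply]
  by_cases hzu : z = u
  · subst hzu
    rw [Equiv.swap_apply_left]
    exact (sameCycle_apply_right).2 (hz.trans huv')
  · by_cases hzv : z = v
    · subst hzv
      rw [Equiv.swap_apply_right]
      exact (sameCycle_apply_right).2 (hz.trans huv'.symm)
    · rw [Equiv.swap_apply_of_ne_of_ne hzu hzv]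
      exact (sameCycle_apply_right).2 hz

/-- F2c -/
lemma sc_mul_swap_cases [Finite α] [DecidableEq α] {π : Equiv.Perm α} {u v : α}
    (huv : ¬ π.SameCycle u v) {x y : α} (h : (π * Equiv.swap u v).SameCycle x y) :
    π.SameCycle x y ∨ (π.SameCycle x u ∧ π.SameCycle y v) ∨
      (π.SameCycle x v ∧ π.SameCycle y u) := by
  set π' := π * Equiv.swap u v with hπ'
  by_cases hx : π.SameCycle x u ∨ π.SameCycle x v
  · -- T invariant under π'
    have hyT : π.SameCycle y u ∨ π.SameCycle y v := by
      have hT : ∀ z ∈ {z : α | π.SameCycle z u ∨ π.SameCycle z v},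
          π' z ∈ {z : α | π.SameCycle z u ∨ π.SameCycle z v} := by
        intro z hz
        simp only [Set.mem_setOf_eq] at hz ⊢
        rw [hπ', Equiv.Perm.mul_apply]
        by_cases hzu : z = u
        · subst hzu
          rw [Equiv.swap_apply_left]
          exact Or.inr (sameCycle_apply_left.2 (Equiv.Perm.SameCycle.refl π v))
        · by_cases hzv : z = v
          · subst hzv
            rw [Equiv.swap_apply_right]
            exact Or.inl (sameCycle_apply_left.2 (Equiv.Perm.SameCycle.refl π u))
          · rw [Equiv.swap_apply_of_ne_of_ne hzu hzv]
            rcases hz with hz | hz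
            · exact Or.inl (sameCycle_apply_left.2 hz)
            · exact Or.inr (sameCycle_apply_left.2 hz)
      exact sameCycle_mem hT (by simpa using hx) h
    rcases hx with hx | hx
    · rcases hyT with hy | hy
      · exact Or.inl (hx.trans hy.symm)
      · exact Or.inr (Or.inl ⟨hx, hy⟩)
    · rcases hyT with hy | hy
      · exact Or.inr (Or.inr ⟨hx, hy⟩)
      · exact Or.inl (hx.trans hy.symm)
  · push_neg at hx
    left
    refine sameCycle_mem (π := π') (S := {z | π.SameCycle x z}) ?_
      (Equiv.Perm.SameCycle.refl π x) h
    intro z hz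
    simp only [Set.mem_setOf_eq] at hz ⊢
    have hzu : z ≠ u := fun he => hx.1 (he ▸ hz)
    have hzv : z ≠ v := fun he => hx.2 (he ▸ hz)
    rw [hπ', Equiv.Perm.mul_apply, Equiv.swap_apply_of_ne_of_ne hzu hzv]
    exact (sameCycle_apply_right).2 hz


def scS (g : Equiv.Perm α) : Setoid α :=
  Setoid.mk g.SameCycle
    ⟨fun x => Equiv.Perm.SameCycle.refl g x, fun h => h.symm, fun h₁ h₂ => h₁.trans h₂⟩

lemma cycleCount_def (g : Equiv.Perm α) : cycleCount g = Nat.card (Quotient (scS g)) := rfl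

lemma map'_surj {r s : Setoid α} (h : ∀ x y, r.r x y → s.r x y) :
    Function.Surjective (Quotient.map' (id : α → α) h) :=
  fun q => Quotient.inductionOn' q fun x => ⟨Quotient.mk'' x, rfl⟩

lemma cycleCount_le_card [Finite α] (g : Equiv.Perm α) : cycleCount g ≤ Nat.card α :=
  Nat.card_le_card_of_surjective (Quotient.mk'' (s₁ := scS g))
    (fun q => Quotient.inductionOn' q fun x => ⟨x, rfl⟩)

/-- CC1 -/
lemma cycleCount_le_mul_swap_add_one [Finite α] [DecidableEq α] (π : Equiv.Perm α) (u v : α) :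
    cycleCount π ≤ cycleCount (π * Equiv.swap u v) + 1 := by
  by_cases hsc : π.SameCycle u v
  · have h := card_quot_le (r := scS (π * Equiv.swap u v)) (s := scS π)
      (fun x y hxy => sc_mul_swap_of_sameCycle hsc hxy)
    rw [cycleCount_def, cycleCount_def]
    omega
  · rw [cycleCount_def, cycleCount_def]
    refine card_le_add_one (Quotient.map' id
      (fun x y (hxy : π.SameCycle x y) => sc_le_sc_mul_swap_of_not hsc hxy))
      (map'_surj _) (Quotient.mk'' u) (Quotient.mk'' v) ?_
    intro X Y
    refine Quotient.inductionOn₂' X Y ?_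
    intro x y hXY
    have hxy : (π * Equiv.swap u v).SameCycle x y := by
      change (Quotient.mk'' x : Quotient (scS (π * Equiv.swap u v))) = Quotient.mk'' y at hXY
      exact Quotient.eq''.1 hXY
    rcases sc_mul_swap_cases hsc hxy with h | ⟨h1, h2⟩ | ⟨h1, h2⟩
    · exact Or.inl (Quotient.sound' h)
    · exact Or.inr (Or.inl ⟨Quotient.sound' h1, Quotient.sound' h2⟩)
    · exact Or.inr (Or.inr ⟨Quotient.sound' h1, Quotient.sound' h2⟩)

/-- CC2 -/
lemma cycleCount_add_one_le [Finite α] [DecidableEq α] (σ : Equiv.Perm α) (u v : α)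
    (h : ¬ (σ * Equiv.swap u v).SameCycle u v) :
    cycleCount σ + 1 ≤ cycleCount (σ * Equiv.swap u v) := by
  have hσ : (σ * Equiv.swap u v) * Equiv.swap u v = σ := by
    rw [mul_assoc]; simp [Equiv.swap_mul_self]
  have huv : σ.SameCycle u v := by
    have := sameCycle_mul_swap_of_not (π := σ * Equiv.swap u v) h
    rwa [hσ] at this
  have hle : ∀ x y, (σ * Equiv.swap u v).SameCycle x y → σ.SameCycle x y := by
    intro x y hxy
    have := sc_le_sc_mul_swap_of_not (π := σ * Equiv.swap u v) h hxy
    rwa [hσ] at this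
  rw [cycleCount_def, cycleCount_def]
  refine card_add_one_le (Quotient.map' id (fun x y (hxy : (σ * Equiv.swap u v).SameCycle x y) =>
      hle x y hxy)) (map'_surj _) (Quotient.mk'' u) (Quotient.mk'' v)
    (fun he => h (Quotient.eq''.1 he)) ?_
  change (Quotient.mk'' u : Quotient (scS σ)) = Quotient.mk'' v
  exact Quotient.sound' huv

section Orbits

variable [Finite α]

/-- the orbit of a point under the closure of a set of permutations stays in
an invariant set -/
lemma orbit_mem {s : Set (Equiv.Perm α)} {S : Set α}
    (hS : ∀ f ∈ s, ∀ x ∈ S, f x ∈ S) {x y : α}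
    (h : (MulAction.orbitRel (Subgroup.closure s) α).r x y) (hy : y ∈ S) : x ∈ S := by
  have key : ∀ w ∈ Subgroup.closure s, ∀ z ∈ S, w z ∈ S ∧ w⁻¹ z ∈ S := by
    intro w hw
    refine Subgroup.closure_induction (fun f hf => ?_) ?_
      (fun f g _ _ ihf ihg => ?_) (fun f _ ihf => ?_) hw
    · intro z hz
      refine ⟨hS f hf z hz, ?_⟩
      have hmaps : Set.MapsTo f S S := fun a ha => hS f hf a ha
      have hbij : Set.BijOn f S S :=
        ((Set.toFinite S).injOn_iff_bijOn_of_mapsTo hmaps).1 (f.injective.injOn)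
      obtain ⟨a, ha, hae⟩ := hbij.surjOn hz
      have : f⁻¹ z = a := by rw [← hae]; simp
      rw [this]; exact ha
    · intro z hz; simpa using hz
    · intro z hz
      constructor
      · have : (f * g) z = f (g z) := rfl
        rw [this]
        exact (ihf _ ((ihg z hz).1)).1
      · have : (f * g)⁻¹ z = g⁻¹ (f⁻¹ z) := by
          rw [mul_inv_rev]; rfl
        rw [this]
        exact (ihg _ ((ihf z hz).2)).2
    · intro z hz
      refine ⟨(ihf z hz).2, ?_⟩
      have : f⁻¹⁻¹ = f := inv_inv f
      rw [this]
      exact (ihf z hz).1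
  obtain ⟨w, rfl⟩ := h
  exact (key (w : Equiv.Perm α) w.2 y hy).1

lemma orbitRel_of_mem_apply {s : Set (Equiv.Perm α)} {f : Equiv.Perm α}
    (hf : f ∈ Subgroup.closure s) (x : α) :
    (MulAction.orbitRel (Subgroup.closure s) α).r (f x) x :=
  ⟨⟨f, hf⟩, rfl⟩

lemma orbitRel_of_sameCycle {s : Set (Equiv.Perm α)} {f : Equiv.Perm α}
    (hf : f ∈ Subgroup.closure s) {x y : α} (h : f.SameCycle x y) :
    (MulAction.orbitRel (Subgroup.closure s) α).r y x := by
  obtain ⟨i, rfl⟩ := h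
  exact ⟨⟨f ^ i, zpow_mem hf i⟩, rfl⟩

end Orbits

section JointOrbits

variable [Finite α] [DecidableEq α]

/-- the joint-orbit relation -/
def JRel (g h : Equiv.Perm α) : Setoid α :=
  MulAction.orbitRel (Subgroup.closure ({g, h} : Set (Equiv.Perm α))) α

omit [Finite α] [DecidableEq α] in
lemma jointOrbitCount_def (g h : Equiv.Perm α) :
    jointOrbitCount g h = Nat.card (Quotient (JRel g h)) := rfl

omit [Finite α] [DecidableEq α] in
lemma mem_closure_left (g h : Equiv.Perm α) :
    g ∈ Subgroup.closure ({g, h} : Set (Equiv.Perm α)) :=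
  Subgroup.subset_closure (Set.mem_insert g {h})

omit [Finite α] [DecidableEq α] in
lemma mem_closure_right (g h : Equiv.Perm α) :
    h ∈ Subgroup.closure ({g, h} : Set (Equiv.Perm α)) :=
  Subgroup.subset_closure (Set.mem_insert_of_mem g rfl)

/-- O1 : refinement of joint orbits -/
lemma jrel_mul_swap_le (g h : Equiv.Perm α) {a b : α} (hsc : h.SameCycle a b)
    {x y : α} (hxy : (JRel g (h * Equiv.swap a b)).r x y) : (JRel g h).r x y := by
  set h' := h * Equiv.swap a b with hh'
  have hab : (JRel g h).r a b :=
    Setoid.symm' _ (orbitRel_of_sameCycle (mem_closure_right g h) hsc)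
  refine orbit_mem (s := {g, h'}) (S := {z | (JRel g h).r z y}) ?_ hxy
    (show (JRel g h).r y y from Setoid.refl' _ y)
  intro f hf z hz
  simp only [Set.mem_setOf_eq] at hz ⊢
  rcases hf with rfl | rfl
  · exact Setoid.trans' _ (orbitRel_of_mem_apply (mem_closure_left f h) z) hz
  · have happ : ∀ w, h' w = h (Equiv.swap a b w) := fun w => rfl
    by_cases hza : z = a
    · subst hza
      rw [happ, Equiv.swap_apply_left]
      refine Setoid.trans' _ (orbitRel_of_mem_apply (mem_closure_right g h) b) ?_
      exact Setoid.trans' _ (Setoid.symm' _ hab) hz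
    · by_cases hzb : z = b
      · subst hzb
        rw [happ, Equiv.swap_apply_right]
        refine Setoid.trans' _ (orbitRel_of_mem_apply (mem_closure_right g h) a) ?_
        exact Setoid.trans' _ hab hz
      · rw [happ, Equiv.swap_apply_of_ne_of_ne hza hzb]
        exact Setoid.trans' _ (orbitRel_of_mem_apply (mem_closure_right g h) z) hz

/-- O2 : join3 -/
lemma jrel_le_mul_swap_join (g h : Equiv.Perm α) {a b : α}
    {x y : α} (hxy : (JRel g h).r x y) :
    (JRel g (h * Equiv.swap a b)).r x y ∨ (JRel g (h * Equiv.swap a b)).r x a ∨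
      (JRel g (h * Equiv.swap a b)).r x b := by
  set h' := h * Equiv.swap a b with hh'
  have hy : y ∈ {z : α | (JRel g h').r z y ∨ (JRel g h').r z a ∨ (JRel g h').r z b} :=
    Or.inl (Setoid.refl' _ y)
  refine orbit_mem (s := {g, h}) ?_ hxy hy
  intro f hf z hz
  simp only [Set.mem_setOf_eq] at hz ⊢
  rcases hf with rfl | rfl
  · have h1 := orbitRel_of_mem_apply (mem_closure_left f h') z
    rcases hz with hz | hz | hz
    · exact Or.inl (Setoid.trans' _ h1 hz)
    · exact Or.inr (Or.inl (Setoid.trans' _ h1 hz))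
    · exact Or.inr (Or.inr (Setoid.trans' _ h1 hz))
  · have happ : ∀ w, f w = h' (Equiv.swap a b w) := by
      intro w
      show f w = (f * Equiv.swap a b) (Equiv.swap a b w)
      rw [Equiv.Perm.mul_apply, Equiv.swap_apply_self]
    by_cases hza : z = a
    · subst hza
      rw [happ, Equiv.swap_apply_left]
      exact Or.inr (Or.inr (orbitRel_of_mem_apply (mem_closure_right g h') b))
    · by_cases hzb : z = b
      · subst hzb
        rw [happ, Equiv.swap_apply_right]
        exact Or.inr (Or.inl (orbitRel_of_mem_apply (mem_closure_right g h') a))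
      · rw [happ, Equiv.swap_apply_of_ne_of_ne hza hzb]
        have h1 : (JRel g h').r (h' z) z := orbitRel_of_mem_apply (mem_closure_right g h') z
        rcases hz with hz | hz | hz
        · exact Or.inl (Setoid.trans' _ h1 hz)
        · exact Or.inr (Or.inl (Setoid.trans' _ h1 hz))
        · exact Or.inr (Or.inr (Setoid.trans' _ h1 hz))

/-- the pattern lemma -/
lemma jrel_pattern (g h : Equiv.Perm α) {a b : α}
    {x y : α} (hxy : (JRel g h).r x y) :
    (JRel g (h * Equiv.swap a b)).r x y ∨
      ((JRel g (h * Equiv.swap a b)).r x a ∧ (JRel g (h * Equiv.swap a b)).r y b) ∨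
      ((JRel g (h * Equiv.swap a b)).r x b ∧ (JRel g (h * Equiv.swap a b)).r y a) := by
  set h' := h * Equiv.swap a b with hh'
  rcases jrel_le_mul_swap_join g h (a := a) (b := b) hxy with h1 | h1 | h1
  · exact Or.inl h1
  · rcases jrel_le_mul_swap_join g h (a := a) (b := b) (Setoid.symm' _ hxy) with h2 | h2 | h2
    · exact Or.inl (Setoid.symm' _ h2)
    · exact Or.inl (Setoid.trans' _ h1 (Setoid.symm' _ h2))
    · exact Or.inr (Or.inl ⟨h1, h2⟩)
  · rcases jrel_le_mul_swap_join g h (a := a) (b := b) (Setoid.symm' _ hxy) with h2 | h2 | h2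
    · exact Or.inl (Setoid.symm' _ h2)
    · exact Or.inr (Or.inr ⟨h1, h2⟩)
    · exact Or.inl (Setoid.trans' _ h1 (Setoid.symm' _ h2))

/-- JO1 -/
lemma jo_mul_swap_le_add_one (g h : Equiv.Perm α) {a b : α} (hsc : h.SameCycle a b) :
    jointOrbitCount g (h * Equiv.swap a b) ≤ jointOrbitCount g h + 1 := by
  rw [jointOrbitCount_def, jointOrbitCount_def]
  refine card_le_add_one (Quotient.map' id (fun x y hxy => jrel_mul_swap_le g h hsc hxy))
    (map'_surj _) (Quotient.mk'' a) (Quotient.mk'' b) ?_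
  intro X Y
  refine Quotient.inductionOn₂' X Y ?_
  intro x y hXY
  have hxy : (JRel g h).r x y := by
    rw [Quotient.map'_mk'', Quotient.map'_mk''] at hXY
    exact Quotient.eq''.1 hXY
  rcases jrel_pattern g h (a := a) (b := b) hxy with h1 | ⟨h1, h2⟩ | ⟨h1, h2⟩
  · exact Or.inl (Quotient.sound' h1)
  · exact Or.inr (Or.inl ⟨Quotient.sound' h1, Quotient.sound' h2⟩)
  · exact Or.inr (Or.inr ⟨Quotient.sound' h1, Quotient.sound' h2⟩)

/-- JO2 -/
lemma jo_mul_swap_le (g h : Equiv.Perm α) {a b : α}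
    (hrel : (JRel g (h * Equiv.swap a b)).r a b) :
    jointOrbitCount g (h * Equiv.swap a b) ≤ jointOrbitCount g h := by
  rw [jointOrbitCount_def, jointOrbitCount_def]
  refine card_quot_le (r := JRel g h) (s := JRel g (h * Equiv.swap a b)) ?_
  intro x y hxy
  rcases jrel_pattern g h (a := a) (b := b) hxy with h1 | ⟨h1, h2⟩ | ⟨h1, h2⟩
  · exact h1
  · exact Setoid.trans' _ h1 (Setoid.trans' _ hrel (Setoid.symm' _ h2))
  · exact Setoid.trans' _ h1 (Setoid.trans' _ (Setoid.symm' _ hrel) (Setoid.symm' _ h2))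

end JointOrbits

section Step

variable [Finite α] [DecidableEq α]

omit [Finite α] [DecidableEq α] in
lemma cayley_def (g h : Equiv.Perm α) :
    cayley g h = Nat.card α - cycleCount (g * h⁻¹) := rfl

/-- The key step lemma: cutting a cycle of `h` into two raises
`d(g,·) + 2#⟨g,·⟩` by at most one. -/
lemma step (g h : Equiv.Perm α) (a b : α) (hab : a ≠ b) (hsc : h.SameCycle a b) :
    (cayley g (h * Equiv.swap a b) : ℤ) + 2 * jointOrbitCount g (h * Equiv.swap a b) ≤
      (cayley g h : ℤ) + 2 * jointOrbitCount g h + 1 := by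
  set h' := h * Equiv.swap a b with hh'
  set u := h a with hu
  set v := h b with hv
  have hσ' : g * h'⁻¹ = (g * h⁻¹) * Equiv.swap u v := by
    have hsw : Equiv.swap u v = h * Equiv.swap a b * h⁻¹ := Equiv.swap_apply_apply h a b
    rw [hsw, hh', mul_inv_rev, Equiv.swap_inv]
    group
  have e1 : cayley g h' = Nat.card α - cycleCount ((g * h⁻¹) * Equiv.swap u v) := by
    rw [cayley_def, hσ']
  have hcc1 : cycleCount (g * h⁻¹) ≤ cycleCount ((g * h⁻¹) * Equiv.swap u v) + 1 :=
    cycleCount_le_mul_swap_add_one (g * h⁻¹) u v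
  have hb1 : cycleCount (g * h⁻¹) ≤ Nat.card α := cycleCount_le_card _
  have hb2 : cycleCount ((g * h⁻¹) * Equiv.swap u v) ≤ Nat.card α := cycleCount_le_card _
  rw [cayley_def g h, e1]
  by_cases hrel : (JRel g h').r a b
  · have hjo : jointOrbitCount g h' ≤ jointOrbitCount g h := jo_mul_swap_le g h hrel
    omega
  · -- split case
    have hub : (JRel g h').r u b := by
      have : h' b = u := by
        rw [hh']
        show h (Equiv.swap a b b) = u
        rw [Equiv.swap_apply_right, hu]
      have h1 := orbitRel_of_mem_apply (mem_closure_right g h') b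
      rwa [this] at h1
    have hva : (JRel g h').r v a := by
      have : h' a = v := by
        rw [hh']
        show h (Equiv.swap a b a) = v
        rw [Equiv.swap_apply_left, hv]
      have h1 := orbitRel_of_mem_apply (mem_closure_right g h') a
      rwa [this] at h1
    have hmem : g * h'⁻¹ ∈ Subgroup.closure ({g, h'} : Set (Equiv.Perm α)) :=
      mul_mem (mem_closure_left g h') (inv_mem (mem_closure_right g h'))
    have hscn : ¬ (g * h'⁻¹).SameCycle u v := by
      intro hcon
      have h2 : (JRel g h').r v u := orbitRel_of_sameCycle hmem hcon
      exact hrel (Setoid.trans' _ (Setoid.symm' _ hva)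
        (Setoid.trans' _ h2 hub))
    rw [hσ'] at hscn
    have hcc2 : cycleCount (g * h⁻¹) + 1 ≤ cycleCount ((g * h⁻¹) * Equiv.swap u v) :=
      cycleCount_add_one_le (g * h⁻¹) u v hscn
    have hjo : jointOrbitCount g h' ≤ jointOrbitCount g h + 1 :=
      jo_mul_swap_le_add_one g h hsc
    omega

end Step

section Concrete

variable {n m c : ℕ}

lemma cast_val_eq [NeZero (m * n)] (x : ZMod (m * n)) :
    ((x.val : ℕ) : ZMod (m * n)) = x := ZMod.natCast_rightInverse x

lemma gB_apply [NeZero (m * n)] {gB : Equiv.Perm (ZMod (m * n))} (hm : 2 ≤ m)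
    (hgB : ∀ q r : ℕ, r < m →
      gB ((q * m + r : ℕ) : ZMod (m * n)) = ((q * m + (r + 1) % m : ℕ) : ZMod (m * n)))
    (x : ZMod (m * n)) :
    gB x = ((x.val / m * m + (x.val % m + 1) % m : ℕ) : ZMod (m * n)) := by
  have e : x.val / m * m + x.val % m = x.val := Nat.div_add_mod' _ _
  have hx : x = ((x.val / m * m + x.val % m : ℕ) : ZMod (m * n)) := by
    rw [e, cast_val_eq]
  conv_lhs => rw [hx]
  exact hgB _ _ (Nat.mod_lt _ (by omega))

lemma blk_lt [NeZero (m * n)] (hm : 2 ≤ m) (x : ZMod (m * n)) : x.val / m < n := by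
  have h1 := ZMod.val_lt x
  rw [Nat.div_lt_iff_lt_mul (by omega : 0 < m)]
  exact lt_of_lt_of_le h1 (le_of_eq (Nat.mul_comm m n))


lemma gB_blk [NeZero (m * n)] {gB : Equiv.Perm (ZMod (m * n))} (hm : 2 ≤ m)
    (hgB : ∀ q r : ℕ, r < m →
      gB ((q * m + r : ℕ) : ZMod (m * n)) = ((q * m + (r + 1) % m : ℕ) : ZMod (m * n)))
    (x : ZMod (m * n)) : (gB x).val / m = x.val / m := by
  rw [gB_apply hm hgB x]
  have hs : (x.val % m + 1) % m < m := Nat.mod_lt _ (by omega)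
  have hq : x.val / m < n := blk_lt hm x
  have hlt : x.val / m * m + (x.val % m + 1) % m < m * n := by
    calc x.val / m * m + (x.val % m + 1) % m < x.val / m * m + m := by omega
    _ = (x.val / m + 1) * m := by ring
    _ ≤ n * m := Nat.mul_le_mul_right _ (by omega)
    _ = m * n := Nat.mul_comm n m
  rw [ZMod.val_cast_of_lt hlt, Nat.add_comm, Nat.add_mul_div_right _ _ (by omega : 0 < m),
    Nat.div_eq_of_lt hs, Nat.zero_add]

lemma gB_pow [NeZero (m * n)] {gB : Equiv.Perm (ZMod (m * n))} (hm : 2 ≤ m)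
    (hgB : ∀ q r : ℕ, r < m →
      gB ((q * m + r : ℕ) : ZMod (m * n)) = ((q * m + (r + 1) % m : ℕ) : ZMod (m * n)))
    (j : ℕ) : ∀ q r : ℕ, r + j < m →
      (gB ^ j) ((q * m + r : ℕ) : ZMod (m * n)) = ((q * m + (r + j) : ℕ) : ZMod (m * n)) := by
  induction j with
  | zero => intro q r _; simp
  | succ j ih =>
      intro q r hrj
      rw [pow_succ, Equiv.Perm.mul_apply, hgB q r (by omega),
        Nat.mod_eq_of_lt (by omega : r + 1 < m), ih q (r + 1) (by omega)]
      congr 2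
      omega

variable {gA gB : Equiv.Perm (ZMod (m * n))}

lemma gA_apply [NeZero (m * n)]
    (hgA : gA = Equiv.addLeft ((c : ℕ) : ZMod (m * n)) * gB *
      (Equiv.addLeft ((c : ℕ) : ZMod (m * n)))⁻¹)
    (x : ZMod (m * n)) : gA x = (c : ZMod (m * n)) + gB (x - (c : ZMod (m * n))) := by
  rw [hgA]
  show (Equiv.addLeft _) (gB ((Equiv.addLeft ((c : ℕ) : ZMod (m * n)))⁻¹ x)) = _
  rw [Equiv.Perm.inv_def, Equiv.addLeft_symm]
  show (c : ZMod (m * n)) + gB (-(c : ZMod (m * n)) + x) = _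
  rw [neg_add_eq_sub]

lemma gA_pow [NeZero (m * n)]
    (hgA : gA = Equiv.addLeft ((c : ℕ) : ZMod (m * n)) * gB *
      (Equiv.addLeft ((c : ℕ) : ZMod (m * n)))⁻¹)
    (j : ℕ) (x : ZMod (m * n)) :
    (gA ^ j) x = (c : ZMod (m * n)) + (gB ^ j) (x - (c : ZMod (m * n))) := by
  rw [hgA, conj_pow]
  show (Equiv.addLeft _) ((gB ^ j) ((Equiv.addLeft ((c : ℕ) : ZMod (m * n)))⁻¹ x)) = _
  rw [Equiv.Perm.inv_def, Equiv.addLeft_symm]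
  show (c : ZMod (m * n)) + (gB ^ j) (-(c : ZMod (m * n)) + x) = _
  rw [neg_add_eq_sub]

end Concrete

section Points

def Apt (m n k : ℕ) : ZMod (m * n) := ((k * m + (m - 1) : ℕ) : ZMod (m * n))
def Bpt (m n c k : ℕ) : ZMod (m * n) := ((k * m + (m - 1) + c : ℕ) : ZMod (m * n))
noncomputable def Pprod (m n c l : ℕ) : Equiv.Perm (ZMod (m * n)) :=
  ((List.range l).map (fun q => Equiv.swap (Apt m n q) (Bpt m n c q))).prod
noncomputable def beta (m n c : ℕ) (x : ZMod (m * n)) : ℕ := (x - (c : ZMod (m * n))).val / m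

variable {n m c : ℕ} [NeZero (m * n)]

lemma cast_small_val (hq : ∀ q r : ℕ, True) : True := trivial

lemma val_qmr (q r : ℕ) (hq : q < n) (hr : r < m) :
    ((q * m + r : ℕ) : ZMod (m * n)).val = q * m + r := by
  refine ZMod.val_cast_of_lt ?_
  calc q * m + r < q * m + m := by omega
  _ = (q + 1) * m := by ring
  _ ≤ n * m := Nat.mul_le_mul_right _ (by omega)
  _ = m * n := Nat.mul_comm n m

lemma div_qmr (q r : ℕ) (hm0 : 0 < m) (hr : r < m) : (q * m + r) / m = q := by
  rw [Nat.add_comm, Nat.add_mul_div_right _ _ hm0, Nat.div_eq_of_lt hr, Nat.zero_add]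

lemma sub_cast (a : ℕ) (hca : c ≤ a) :
    ((a : ℕ) : ZMod (m * n)) - ((c : ℕ) : ZMod (m * n)) = ((a - c : ℕ) : ZMod (m * n)) := by
  rw [Nat.cast_sub hca]

lemma beta_A (hn : 1 ≤ n) (hm : 2 ≤ m) (hc : m = 2 * c) {k : ℕ} (hk : k < n) :
    beta m n c (Apt m n k) = k := by
  have h1 : Apt m n k - ((c : ℕ) : ZMod (m * n)) = ((k * m + (c - 1) : ℕ) : ZMod (m * n)) := by
    rw [Apt, sub_cast _ (by omega)]
    congr 1
    omega
  rw [beta, h1, val_qmr k (c - 1) hk (by omega), div_qmr _ _ (by omega) (by omega)]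

lemma beta_B (hn : 1 ≤ n) (hm : 2 ≤ m) (hc : m = 2 * c) {k : ℕ} (hk : k < n) :
    beta m n c (Bpt m n c k) = k := by
  have h1 : Bpt m n c k - ((c : ℕ) : ZMod (m * n)) =
      ((k * m + (m - 1) : ℕ) : ZMod (m * n)) := by
    rw [Bpt, sub_cast _ (by omega : c ≤ k * m + (m - 1) + c)]
    congr 1
    omega
  rw [beta, h1, val_qmr k (m - 1) hk (by omega), div_qmr _ _ (by omega) (by omega)]

variable {gA gB : Equiv.Perm (ZMod (m * n))}

lemma beta_gA (hm : 2 ≤ m)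
    (hgB : ∀ q r : ℕ, r < m →
      gB ((q * m + r : ℕ) : ZMod (m * n)) = ((q * m + (r + 1) % m : ℕ) : ZMod (m * n)))
    (hgA : gA = Equiv.addLeft ((c : ℕ) : ZMod (m * n)) * gB *
      (Equiv.addLeft ((c : ℕ) : ZMod (m * n)))⁻¹)
    (x : ZMod (m * n)) : beta m n c (gA x) = beta m n c x := by
  have h1 : gA x - ((c : ℕ) : ZMod (m * n)) = gB (x - ((c : ℕ) : ZMod (m * n))) := by
    rw [gA_apply hgA, add_sub_cancel_left]
  rw [beta, h1, gB_blk hm hgB]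
  rfl

lemma cast_c_ne_zero (hn : 1 ≤ n) (hm : 2 ≤ m) (hc : m = 2 * c) :
    ((c : ℕ) : ZMod (m * n)) ≠ 0 := by
  intro h
  rw [ZMod.natCast_eq_zero_iff] at h
  have := Nat.le_of_dvd (by omega) h
  nlinarith

lemma A_ne_B (hn : 1 ≤ n) (hm : 2 ≤ m) (hc : m = 2 * c) (k : ℕ) :
    Apt m n k ≠ Bpt m n c k := by
  intro h
  apply cast_c_ne_zero hn hm hc
  have : Bpt m n c k = Apt m n k + ((c : ℕ) : ZMod (m * n)) := by
    rw [Apt, Bpt]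
    push_cast
    ring
  rw [this] at h
  nth_rewrite 1 [← add_zero (Apt m n k)] at h
  exact (add_left_cancel h).symm

lemma swap_fix (hn : 1 ≤ n) (hm : 2 ≤ m) (hc : m = 2 * c) {x : ZMod (m * n)} {q k : ℕ}
    (hq : q < n) (hqk : q ≠ k) (hx : beta m n c x = k) :
    Equiv.swap (Apt m n q) (Bpt m n c q) x = x := by
  apply Equiv.swap_apply_of_ne_of_ne
  · intro h; rw [h] at hx; rw [beta_A hn hm hc hq] at hx; exact hqk hx
  · intro h; rw [h] at hx; rw [beta_B hn hm hc hq] at hx; exact hqk hx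

lemma P_fix (hn : 1 ≤ n) (hm : 2 ≤ m) (hc : m = 2 * c) (l : ℕ) (hl : l ≤ n) {x : ZMod (m * n)}
    (hx : ∀ q < l, beta m n c x ≠ q) : Pprod m n c l x = x := by
  induction l with
  | zero => rw [Pprod]; simp
  | succ l ih =>
      have hstep : Pprod m n c (l + 1) = Pprod m n c l *
          Equiv.swap (Apt m n l) (Bpt m n c l) := by
        rw [Pprod, Pprod, List.range_succ, List.map_append, List.prod_append]
        simp
      rw [hstep, Equiv.Perm.mul_apply,
        swap_fix hn hm hc (by omega) (fun he => hx l (by omega) he.symm) rfl]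
      exact ih (by omega) (fun q hq => hx q (by omega))

lemma P_succ : Pprod m n c (l + 1) = Pprod m n c l *
    Equiv.swap (Apt m n l) (Bpt m n c l) := by
  rw [Pprod, Pprod, List.range_succ, List.map_append, List.prod_append]
  simp

end Points

section Assemble

variable {n m c : ℕ} [NeZero (m * n)]

lemma P_A (hn : 1 ≤ n) (hm : 2 ≤ m) (hc : m = 2 * c) (l : ℕ) (hl : l ≤ n) :
    ∀ k < l, Pprod m n c l (Apt m n k) = Bpt m n c k := by
  induction l with
  | zero => omega
  | succ l ih =>
      intro k hk
      rw [P_succ, Equiv.Perm.mul_apply]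
      by_cases hkl : k = l
      · subst hkl
        rw [Equiv.swap_apply_left]
        exact P_fix hn hm hc k (by omega)
          (fun q hq hbq => by rw [beta_B hn hm hc (by omega)] at hbq; omega)
      · rw [swap_fix hn hm hc (by omega) (Ne.symm hkl) (beta_A hn hm hc (by omega))]
        exact ih (by omega) k (by omega)

lemma P_B (hn : 1 ≤ n) (hm : 2 ≤ m) (hc : m = 2 * c) (l : ℕ) (hl : l ≤ n) :
    ∀ k < l, Pprod m n c l (Bpt m n c k) = Apt m n k := by
  induction l with
  | zero => omega
  | succ l ih =>
      intro k hk
      rw [P_succ, Equiv.Perm.mul_apply]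
      by_cases hkl : k = l
      · subst hkl
        rw [Equiv.swap_apply_right]
        exact P_fix hn hm hc k (by omega)
          (fun q hq hbq => by rw [beta_A hn hm hc (by omega)] at hbq; omega)
      · rw [swap_fix hn hm hc (by omega) (Ne.symm hkl) (beta_B hn hm hc (by omega))]
        exact ih (by omega) k (by omega)

variable {gA gB : Equiv.Perm (ZMod (m * n))}

lemma gA_pow_c (hn : 1 ≤ n) (hm : 2 ≤ m) (hc : m = 2 * c)
    (hgB : ∀ q r : ℕ, r < m →
      gB ((q * m + r : ℕ) : ZMod (m * n)) = ((q * m + (r + 1) % m : ℕ) : ZMod (m * n)))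
    (hgA : gA = Equiv.addLeft ((c : ℕ) : ZMod (m * n)) * gB *
      (Equiv.addLeft ((c : ℕ) : ZMod (m * n)))⁻¹)
    {k : ℕ} (hk : k < n) : (gA ^ c) (Apt m n k) = Bpt m n c k := by
  have h1 : Apt m n k - ((c : ℕ) : ZMod (m * n)) = ((k * m + (c - 1) : ℕ) : ZMod (m * n)) := by
    rw [Apt, sub_cast _ (by omega)]
    congr 1
    omega
  rw [gA_pow hgA, h1, gB_pow hm hgB c k (c - 1) (by omega), Bpt,
    show c - 1 + c = m - 1 from by omega]
  push_cast
  ring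

lemma beta_gA_pow (hm : 2 ≤ m)
    (hgB : ∀ q r : ℕ, r < m →
      gB ((q * m + r : ℕ) : ZMod (m * n)) = ((q * m + (r + 1) % m : ℕ) : ZMod (m * n)))
    (hgA : gA = Equiv.addLeft ((c : ℕ) : ZMod (m * n)) * gB *
      (Equiv.addLeft ((c : ℕ) : ZMod (m * n)))⁻¹)
    (j : ℕ) (x : ZMod (m * n)) : beta m n c ((gA ^ j) x) = beta m n c x := by
  induction j with
  | zero => simp
  | succ j ih => rw [pow_succ', Equiv.Perm.mul_apply, beta_gA hm hgB hgA, ih]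

lemma H_pow (hn : 1 ≤ n) (hm : 2 ≤ m) (hc : m = 2 * c)
    (hgB : ∀ q r : ℕ, r < m →
      gB ((q * m + r : ℕ) : ZMod (m * n)) = ((q * m + (r + 1) % m : ℕ) : ZMod (m * n)))
    (hgA : gA = Equiv.addLeft ((c : ℕ) : ZMod (m * n)) * gB *
      (Equiv.addLeft ((c : ℕ) : ZMod (m * n)))⁻¹)
    {k : ℕ} (hk : k < n) (j : ℕ) :
    ((gA * Pprod m n c k) ^ j) (Apt m n k) = (gA ^ j) (Apt m n k) := by
  induction j with
  | zero => rfl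
  | succ j ih =>
      rw [pow_succ', pow_succ', Equiv.Perm.mul_apply, Equiv.Perm.mul_apply, ih,
        Equiv.Perm.mul_apply]
      congr 1
      refine P_fix hn hm hc k (by omega) ?_
      intro q hq hbq
      rw [beta_gA_pow hm hgB hgA, beta_A hn hm hc hk] at hbq
      omega

lemma H_sameCycle (hn : 1 ≤ n) (hm : 2 ≤ m) (hc : m = 2 * c)
    (hgB : ∀ q r : ℕ, r < m →
      gB ((q * m + r : ℕ) : ZMod (m * n)) = ((q * m + (r + 1) % m : ℕ) : ZMod (m * n)))
    (hgA : gA = Equiv.addLeft ((c : ℕ) : ZMod (m * n)) * gB *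
      (Equiv.addLeft ((c : ℕ) : ZMod (m * n)))⁻¹)
    {k : ℕ} (hk : k < n) :
    (gA * Pprod m n c k).SameCycle (Apt m n k) (Bpt m n c k) := by
  refine ⟨((c : ℕ) : ℤ), ?_⟩
  rw [zpow_natCast, H_pow hn hm hc hgB hgA hk c, gA_pow_c hn hm hc hgB hgA hk]

lemma chain (hn : 1 ≤ n) (hm : 2 ≤ m) (hc : m = 2 * c)
    (hgB : ∀ q r : ℕ, r < m →
      gB ((q * m + r : ℕ) : ZMod (m * n)) = ((q * m + (r + 1) % m : ℕ) : ZMod (m * n)))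
    (hgA : gA = Equiv.addLeft ((c : ℕ) : ZMod (m * n)) * gB *
      (Equiv.addLeft ((c : ℕ) : ZMod (m * n)))⁻¹)
    (g : Equiv.Perm (ZMod (m * n))) :
    ∀ k ≤ n, (cayley g (gA * Pprod m n c k) : ℤ) + 2 * jointOrbitCount g (gA * Pprod m n c k) ≤
      (cayley g gA : ℤ) + 2 * jointOrbitCount g gA + k := by
  intro k
  induction k with
  | zero =>
      intro _
      have h0 : Pprod m n c 0 = 1 := by rw [Pprod]; simp
      rw [h0, mul_one]
      omega
  | succ k ih =>
      intro hk1
      have hstep : gA * Pprod m n c (k + 1) =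
          (gA * Pprod m n c k) * Equiv.swap (Apt m n k) (Bpt m n c k) := by
        rw [P_succ, mul_assoc]
      rw [hstep]
      have h1 := step g (gA * Pprod m n c k) (Apt m n k) (Bpt m n c k)
        (A_ne_B hn hm hc k) (H_sameCycle hn hm hc hgB hgA (by omega))
      have h2 := ih (by omega)
      push_cast at h1 h2 ⊢
      omega

end Assemble

section Final

variable {n m c : ℕ} [NeZero (m * n)]

lemma arA (hc : m = 2 * c) (hc1 : 1 ≤ c) (k : ℕ) :
    k * m + (m - 1) = (2 * k + 1) * c + (c - 1) := by
  obtain ⟨d, rfl⟩ : ∃ d, c = d + 1 := ⟨c - 1, by omega⟩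
  subst hc
  rw [show 2 * (d + 1) - 1 = 2 * d + 1 from by omega, show d + 1 - 1 = d from by omega]
  ring

lemma arB (hc : m = 2 * c) (hc1 : 1 ≤ c) (k : ℕ) :
    k * m + (m - 1) + c = (2 * k + 2) * c + (c - 1) := by
  obtain ⟨d, rfl⟩ : ∃ d, c = d + 1 := ⟨c - 1, by omega⟩
  subst hc
  rw [show 2 * (d + 1) - 1 = 2 * d + 1 from by omega, show d + 1 - 1 = d from by omega]
  ring

lemma c_dvd_N (hc : m = 2 * c) : c ∣ m * n := ⟨2 * n, by rw [hc]; ring⟩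

lemma Aval_modc (hm : 2 ≤ m) (hc : m = 2 * c) {q : ℕ} (hq : q < n) :
    (Apt m n q).val % c = c - 1 := by
  rw [Apt, val_qmr q (m - 1) hq (by omega), arA hc (by omega),
    Nat.add_comm ((2 * q + 1) * c) (c - 1), Nat.add_mul_mod_self_right]
  exact Nat.mod_eq_of_lt (by omega)

lemma Bval_modc (hm : 2 ≤ m) (hc : m = 2 * c) (q : ℕ) :
    (Bpt m n c q).val % c = c - 1 := by
  rw [Bpt, ZMod.val_natCast, Nat.mod_mod_of_dvd _ (c_dvd_N hc), arB hc (by omega),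
    Nat.add_comm ((2 * q + 2) * c) (c - 1), Nat.add_mul_mod_self_right]
  exact Nat.mod_eq_of_lt (by omega)

lemma P_fix' (l : ℕ) {x : ZMod (m * n)}
    (hx : ∀ q < l, x ≠ Apt m n q ∧ x ≠ Bpt m n c q) : Pprod m n c l x = x := by
  induction l with
  | zero => rw [Pprod]; simp
  | succ l ih =>
      rw [P_succ, Equiv.Perm.mul_apply,
        Equiv.swap_apply_of_ne_of_ne (hx l (by omega)).1 (hx l (by omega)).2]
      exact ih (fun q hq => hx q (by omega))

variable {gA gB X : Equiv.Perm (ZMod (m * n))}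

/-- value of gA on A-points -/
lemma gA_on_A (hn : 1 ≤ n) (hm : 2 ≤ m) (hc : m = 2 * c)
    (hgB : ∀ q r : ℕ, r < m →
      gB ((q * m + r : ℕ) : ZMod (m * n)) = ((q * m + (r + 1) % m : ℕ) : ZMod (m * n)))
    (hgA : gA = Equiv.addLeft ((c : ℕ) : ZMod (m * n)) * gB *
      (Equiv.addLeft ((c : ℕ) : ZMod (m * n)))⁻¹)
    (k : ℕ) : gA (Apt m n k) = (((k + 1) * m : ℕ) : ZMod (m * n)) := by
  have h1 : Apt m n k - ((c : ℕ) : ZMod (m * n)) =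
      ((k * m + (c - 1) : ℕ) : ZMod (m * n)) := by
    rw [Apt, sub_cast _ (by omega)]
    congr 1
    omega
  rw [gA_apply hgA, h1, hgB k (c - 1) (by omega),
    show c - 1 + 1 = c from by omega, Nat.mod_eq_of_lt (by omega : c < m), hc]
  push_cast
  ring

/-- value of gA on B-points -/
lemma gA_on_B (hn : 1 ≤ n) (hm : 2 ≤ m) (hc : m = 2 * c)
    (hgB : ∀ q r : ℕ, r < m →
      gB ((q * m + r : ℕ) : ZMod (m * n)) = ((q * m + (r + 1) % m : ℕ) : ZMod (m * n)))
    (hgA : gA = Equiv.addLeft ((c : ℕ) : ZMod (m * n)) * gB *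
      (Equiv.addLeft ((c : ℕ) : ZMod (m * n)))⁻¹)
    (k : ℕ) : gA (Bpt m n c k) = ((k * m + c : ℕ) : ZMod (m * n)) := by
  have h1 : Bpt m n c k - ((c : ℕ) : ZMod (m * n)) =
      ((k * m + (m - 1) : ℕ) : ZMod (m * n)) := by
    rw [Bpt, sub_cast _ (by omega)]
    congr 1
    omega
  rw [gA_apply hgA, h1, hgB k (m - 1) (by omega),
    show m - 1 + 1 = m from by omega, Nat.mod_self, Nat.add_zero]
  push_cast
  ring

/-- main pointwise identity -/
lemma P_eq_X (hn : 1 ≤ n) (hm : 2 ≤ m) (hc : m = 2 * c)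
    (hgB : ∀ q r : ℕ, r < m →
      gB ((q * m + r : ℕ) : ZMod (m * n)) = ((q * m + (r + 1) % m : ℕ) : ZMod (m * n)))
    (hgA : gA = Equiv.addLeft ((c : ℕ) : ZMod (m * n)) * gB *
      (Equiv.addLeft ((c : ℕ) : ZMod (m * n)))⁻¹)
    (hX : ∀ q r : ℕ, r < c →
      X ((q * c + r : ℕ) : ZMod (m * n)) = ((q * c + (r + 1) % c : ℕ) : ZMod (m * n))) :
    gA * Pprod m n c n = X := by
  have hc1 : 1 ≤ c := by omega
  ext x
  rw [Equiv.Perm.mul_apply]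
  have hxw : ((x.val : ℕ) : ZMod (m * n)) = x := cast_val_eq x
  have hwlt : x.val < m * n := ZMod.val_lt x
  obtain ⟨k, r, hkm, hrm, hkn⟩ : ∃ k r, k * m + r = x.val ∧ r < m ∧ k < n :=
    ⟨x.val / m, x.val % m, Nat.div_add_mod' _ _, Nat.mod_lt _ (by omega), blk_lt hm x⟩
  have hwc : x.val % c = r % c := by
    have h1 : x.val % c = (x.val % m) % c := (Nat.mod_mod_of_dvd x.val ⟨2, by omega⟩).symm
    have h2 : x.val % m = r := by
      rw [← hkm, Nat.add_comm, Nat.add_mul_mod_self_right, Nat.mod_eq_of_lt hrm]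
    rw [h1, h2]
  by_cases hcase : r % c = c - 1
  · -- r = c - 1 or r = m - 1
    have hrc : r = c - 1 ∨ r = m - 1 := by
      have h1 := Nat.div_add_mod r c
      have h2 : r / c < 2 := Nat.div_lt_of_lt_mul (by omega)
      interval_cases h : r / c <;> omega
    rcases hrc with hrc | hrc
    · -- case iii : x is a B-point
      subst hrc
      -- identify k' with x = Bpt k'
      obtain ⟨k', hk'n, hxB, hfin⟩ : ∃ k', k' < n ∧ x = Bpt m n c k' ∧
          (((k' + 1) * m : ℕ) : ZMod (m * n)) = ((k * m : ℕ) : ZMod (m * n)) := by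
        rcases Nat.eq_zero_or_pos k with h0 | h0
        · subst h0
          refine ⟨n - 1, by omega, ?_, ?_⟩
          · rw [← hxw, Bpt]
            have e1 : (n - 1) * m + (m - 1) + c = m * n + (c - 1) := by
              obtain ⟨e, rfl⟩ : ∃ e, n = e + 1 := ⟨n - 1, by omega⟩
              rw [show e + 1 - 1 = e from rfl]
              have h2 : m * (e + 1) = e * m + m := by ring
              omega
            have e2 : x.val = c - 1 := by omega
            rw [e1, e2, Nat.cast_add, ZMod.natCast_self, zero_add]
          · rw [show n - 1 + 1 = n from by omega]
            have : ((n * m : ℕ) : ZMod (m * n)) = 0 := by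
              rw [ZMod.natCast_eq_zero_iff]
              exact ⟨1, by ring⟩
            rw [this, Nat.zero_mul, Nat.cast_zero]
        · obtain ⟨t, rfl⟩ : ∃ t, k = t + 1 := ⟨k - 1, by omega⟩
          refine ⟨t, by omega, ?_, by rfl⟩
          rw [← hxw, Bpt]
          congr 1
          have e : (t + 1) * m = t * m + m := by ring
          omega
      have hPx : Pprod m n c n x = Apt m n k' := by
        rw [hxB]
        exact P_B hn hm hc n le_rfl k' hk'n
      rw [hPx, gA_on_A hn hm hc hgB hgA k', hfin]
      -- X x = (k*m : ℕ)
      have harg : ((2 * k * c + (c - 1) : ℕ) : ZMod (m * n)) = x := by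
        rw [← hxw]
        congr 1
        have : k * m = 2 * k * c := by rw [hc]; ring
        omega
      have happ := hX (2 * k) (c - 1) (by omega)
      rw [harg, show c - 1 + 1 = c from by omega, Nat.mod_self, Nat.add_zero] at happ
      rw [happ]
      congr 1
      rw [hc]
      ring
    · -- case ii : x is an A-point
      subst hrc
      have hxA : x = Apt m n k := by
        rw [← hxw, Apt]
        congr 1
        omega
      have hPx : Pprod m n c n x = Bpt m n c k := by
        rw [hxA]
        exact P_A hn hm hc n le_rfl k hkn
      rw [hPx, gA_on_B hn hm hc hgB hgA k]
      have harg : (((2 * k + 1) * c + (c - 1) : ℕ) : ZMod (m * n)) = x := by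
        rw [← hxw]
        congr 1
        rw [← arA hc hc1]
        omega
      have happ := hX (2 * k + 1) (c - 1) (by omega)
      rw [harg, show c - 1 + 1 = c from by omega, Nat.mod_self, Nat.add_zero] at happ
      rw [happ]
      congr 1
      rw [hc]
      ring
  · -- case A : generic point
    have hfix : Pprod m n c n x = x := by
      refine P_fix' n ?_
      intro q hq
      constructor
      · intro he
        have h1 := Aval_modc (n := n) hm hc hq
        rw [← he] at h1
        omega
      · intro he
        have h1 := Bval_modc (n := n) hm hc q
        rw [← he] at h1
        omega
    rw [hfix]
    -- gA x = x + 1 = X x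
    have hyval : (((x - ((c : ℕ) : ZMod (m * n))).val + c : ℕ) : ZMod (m * n)) =
        ((x.val : ℕ) : ZMod (m * n)) := by
      rw [Nat.cast_add, cast_val_eq, hxw]
      ring
    have hymod : ((x - ((c : ℕ) : ZMod (m * n))).val + c) % (m * n) = x.val % (m * n) :=
      (ZMod.natCast_eq_natCast_iff' _ _ _).1 hyval
    have hyc : (x - ((c : ℕ) : ZMod (m * n))).val % c = x.val % c := by
      have h1 : ((x - ((c : ℕ) : ZMod (m * n))).val + c) % c =
          (x - ((c : ℕ) : ZMod (m * n))).val % c := Nat.add_mod_right _ _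
      have h2 : (((x - ((c : ℕ) : ZMod (m * n))).val + c) % (m * n)) % c =
          ((x - ((c : ℕ) : ZMod (m * n))).val + c) % c :=
        Nat.mod_mod_of_dvd _ (c_dvd_N hc)
      have h3 : (x.val % (m * n)) % c = x.val % c := Nat.mod_mod_of_dvd _ (c_dvd_N hc)
      rw [hymod] at h2
      omega
    have hr'c : (x - ((c : ℕ) : ZMod (m * n))).val % m % c =
        (x - ((c : ℕ) : ZMod (m * n))).val % c := Nat.mod_mod_of_dvd _ ⟨2, by omega⟩
    have hr'ne : (x - ((c : ℕ) : ZMod (m * n))).val % m ≠ m - 1 := by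
      intro he
      rw [he, show m - 1 = c + (c - 1) from by omega, Nat.add_mod_left,
        Nat.mod_eq_of_lt (by omega : c - 1 < c)] at hr'c
      omega
    have hr'm : (x - ((c : ℕ) : ZMod (m * n))).val % m < m := Nat.mod_lt _ (by omega)
    have hgAx : gA x = x + 1 := by
      rw [gA_apply hgA, gB_apply hm hgB (x - ((c : ℕ) : ZMod (m * n))),
        Nat.mod_eq_of_lt (by omega : (x - ((c : ℕ) : ZMod (m * n))).val % m + 1 < m)]
      have e1 : (x - ((c : ℕ) : ZMod (m * n))).val / m * m +
          ((x - ((c : ℕ) : ZMod (m * n))).val % m + 1) =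
          (x - ((c : ℕ) : ZMod (m * n))).val + 1 := by
        have := Nat.div_add_mod' (x - ((c : ℕ) : ZMod (m * n))).val m
        omega
      rw [e1, Nat.cast_add, Nat.cast_one, cast_val_eq]
      ring
    have hXx : X x = x + 1 := by
      have hwcc : x.val % c < c := Nat.mod_lt _ (by omega)
      have harg : ((x.val / c * c + x.val % c : ℕ) : ZMod (m * n)) = x := by
        rw [Nat.div_add_mod' x.val c, hxw]
      have happ := hX (x.val / c) (x.val % c) hwcc
      rw [harg, Nat.mod_eq_of_lt (by omega : x.val % c + 1 < c)] at happ
      rw [happ, show x.val / c * c + (x.val % c + 1) = x.val + 1 from by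
        have := Nat.div_add_mod' x.val c; omega,
        Nat.cast_add, Nat.cast_one, hxw]
    rw [hgAx, hXx]

end Final

end Pinch

/-- The pinching inequality `G_X(g) ≤ G_{g_A}(g)`, explicitly:
`d(g,g_A) - d(g,X) + n + 2 #⟨g,g_A⟩ - 2 #⟨g,X⟩ ≥ 0`. -/
theorem stmt18 (n m : ℕ) (hn : 1 ≤ n) (hm : 2 ≤ m) (hme : Even m)
    (gB gA X : Equiv.Perm (ZMod (m * n)))
(hgB : ∀ q r : ℕ, r < m →
      gB ((q * m + r : ℕ) : ZMod (m * n)) = ((q * m + (r + 1) % m : ℕ) : ZMod (m * n)))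
    (hgA : gA = Equiv.addLeft ((m / 2 : ℕ) : ZMod (m * n)) * gB *
      (Equiv.addLeft ((m / 2 : ℕ) : ZMod (m * n)))⁻¹)
(hX : ∀ q r : ℕ, r < m / 2 →
      X ((q * (m / 2) + r : ℕ) : ZMod (m * n)) =
        ((q * (m / 2) + (r + 1) % (m / 2) : ℕ) : ZMod (m * n)))
    :
    ∀ g : Equiv.Perm (ZMod (m * n)),
      (0 : ℤ) ≤ (cayley g gA : ℤ) - (cayley g X : ℤ) + (n : ℤ) +
        2 * (jointOrbitCount g gA : ℤ) - 2 * (jointOrbitCount g X : ℤ) := by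
  intro g
  haveI : NeZero (m * n) := ⟨Nat.mul_ne_zero (by omega) (by omega)⟩
  obtain ⟨c, hc⟩ : ∃ c, m = 2 * c := by
    obtain ⟨r, hr⟩ := hme
    exact ⟨r, by omega⟩
  have hc2 : m / 2 = c := by omega
  rw [hc2] at hgA hX
  have hchain := Pinch.chain hn hm hc hgB hgA g n le_rfl
  rw [Pinch.P_eq_X hn hm hc hgB hgA hX] at hchain
  omega
end
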